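/- arXiv:1209.2980 — 2 statements merged into one kernel-verified Lean document; each statement's English description precedes it below -/
import Mathlib

section
/- Let μ be a finite positive Radon measure on E satisfying Hypothesis 2.2 and let ρ ∈ BV(H,H₁). Then for every l ∈ Q^{1/2}(H) ∩ H₁ ∩ E* one has ρ ∈ BV_l(E); more precisely, for every g ∈ 𝓕C_b¹, |∫_E ⟨l, Dg(z)⟩ ρ(z) μ(dz)| ≤ (V(ρ)‖l‖_{H₁} + ‖ρ‖_{L²(μ)}‖β_l‖_{L²(μ)}) ‖g‖_∞. -/
open MeasureTheory Filter
open scoped RealInnerProductSpace ENNReal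

noncomputable section

/-- The class `𝓕C_b¹` of `C¹` cylinder functions
`u z = f (l₁ z, …, l_m z)` with `f ∈ C_b¹(ℝ^m)`. -/
def FCb1 (E : Type*) [NormedAddCommGroup E] [NormedSpace ℝ E] : Set (E → ℝ) :=
  {u | ∃ (m : ℕ) (l : Fin m → (E →L[ℝ] ℝ)) (f : (Fin m → ℝ) → ℝ),
      ContDiff ℝ 1 f ∧ (∃ C, ∀ x, |f x| ≤ C) ∧ (∃ C, ∀ x, ‖fderiv ℝ f x‖ ≤ C) ∧
      ∀ z, u z = f fun i => l i z}

/-- Directional derivative `∂u/∂v (z) = (d/ds) u (z + s v) |_{s = 0}`. -/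
def dirDeriv {E : Type*} [NormedAddCommGroup E] [NormedSpace ℝ E]
    (u : E → ℝ) (v : E) (z : E) : ℝ :=
  deriv (fun s : ℝ => u (z + s • v)) 0

/-- `β` is (a version of) the logarithmic derivative of `μ` along `v`, i.e. `μ` is
Fomin-differentiable along `v` with `d_v μ = β ⬝ μ` (a finite signed measure `≪ μ`). -/
def IsLogDeriv {E : Type*} [NormedAddCommGroup E] [NormedSpace ℝ E] [MeasurableSpace E]
    (μ : Measure E) (v : E) (β : E → ℝ) : Prop :=
  Integrable β μ ∧ ∀ φ ∈ FCb1 E, ∫ z, dirDeriv φ v z ∂μ = -∫ z, φ z * β z ∂μ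

/-- `v ∈ H(μ)` : `μ` is Fomin-differentiable along `v` with square-integrable
logarithmic derivative. -/
def MemHmu {E : Type*} [NormedAddCommGroup E] [NormedSpace ℝ E] [MeasurableSpace E]
    (μ : Measure E) (v : E) : Prop :=
  ∃ β : E → ℝ, IsLogDeriv μ v β ∧ MemLp β 2 μ

/-- Hypothesis 2.2: `Q` is a bounded symmetric nonnegative operator on `H` with nonnegative
symmetric square root `sqrtQ`, `Q^{1/2}(H) ⊆ H(μ)` (with chosen logarithmic derivatives
`β h ∈ L²(μ)` for `h ∈ Q^{1/2}(H)`), and there is an orthonormal basis `e : ℕ → H` of `H`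
consisting of elements of `E*` which are eigenvectors of `Q` with eigenvalues `lam j > 0`.
Here `ι : H →L[ℝ] E` is the embedding of `H` into `E`. -/
structure Hyp22 {E H : Type*} [NormedAddCommGroup E] [NormedSpace ℝ E] [MeasurableSpace E]
    [NormedAddCommGroup H] [InnerProductSpace ℝ H]
    (μ : Measure E) (ι : H →L[ℝ] E) (Q sqrtQ : H →L[ℝ] H)
    (e : ℕ → H) (lam : ℕ → ℝ) (β : H → E → ℝ) : Prop where
  Q_symm : ∀ x y : H, ⟪Q x, y⟫ = ⟪x, Q y⟫
  Q_nonneg : ∀ x : H, 0 ≤ ⟪Q x, x⟫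
  sqrtQ_symm : ∀ x y : H, ⟪sqrtQ x, y⟫ = ⟪x, sqrtQ y⟫
  sqrtQ_nonneg : ∀ x : H, 0 ≤ ⟪sqrtQ x, x⟫
  sqrtQ_sq : ∀ x : H, sqrtQ (sqrtQ x) = Q x
  ortho : Orthonormal ℝ e
  total : (Submodule.span ℝ (Set.range e)).topologicalClosure = ⊤
  basis_in_dual : ∀ j : ℕ, ∃ l : E →L[ℝ] ℝ, ∀ h : H, ⟪e j, h⟫ = l (ι h)
  lam_pos : ∀ j, 0 < lam j
  eigen : ∀ j, Q (e j) = lam j • e j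
  logDeriv : ∀ h ∈ Set.range sqrtQ, IsLogDeriv μ (ι h) (β h)
  logDeriv_L2 : ∀ h ∈ Set.range sqrtQ, MemLp (β h) 2 μ

/-- `x ∈ H₁`, where `H₁ = {x ∈ H : ∑ c_j² ⟨x,e_j⟩² < ∞}`. -/
def memH1 {H : Type*} [NormedAddCommGroup H] [InnerProductSpace ℝ H]
    (c : ℕ → ℝ) (e : ℕ → H) (x : H) : Prop :=
  Summable fun j => (c j) ^ 2 * ⟪x, e j⟫ ^ 2

/-- The square of the `H₁`-norm, `‖x‖_{H₁}² = ∑ c_j² ⟨x,e_j⟩²`. -/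
def normH1sq {H : Type*} [NormedAddCommGroup H] [InnerProductSpace ℝ H]
    (c : ℕ → ℝ) (e : ℕ → H) (x : H) : ℝ :=
  ∑' j, (c j) ^ 2 * ⟪x, e j⟫ ^ 2

/-- The `H₁`-inner product `⟨x,y⟩_{H₁} = ∑ c_j² ⟨x,e_j⟩⟨y,e_j⟩`. -/
def innerH1 {H : Type*} [NormedAddCommGroup H] [InnerProductSpace ℝ H]
    (c : ℕ → ℝ) (e : ℕ → H) (x y : H) : ℝ :=
  ∑' j, (c j) ^ 2 * (⟪x, e j⟫ * ⟪y, e j⟫)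

/-- The squared `H₁*`-norm of an element of `H₁*` given by its coefficients `b j`
with respect to the orthonormal basis `{c_j e_j}` of `H₁*`. -/
def normH1starSq (b : ℕ → ℝ) : ℝ := ∑' j, (b j) ^ 2

/-- The dual pairing `_{H₁}⟨x, σ⟩_{H₁*}` of `x ∈ H₁` with the element `σ ∈ H₁*` whose
coefficients with respect to the orthonormal basis `{c_j e_j}` of `H₁*` are `b j`;
since the pairing extends the inner product of `H`, it equals `∑ b_j c_j ⟨x, e_j⟩`. -/
def pairH1 {H : Type*} [NormedAddCommGroup H] [InnerProductSpace ℝ H]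
    (c : ℕ → ℝ) (e : ℕ → H) (x : H) (b : ℕ → ℝ) : ℝ :=
  ∑' j, b j * (c j * ⟪x, e j⟫)

/-- `ψ` is a version of `D*G` for the vector field `G z = ∑ j, g j z • lv j`, i.e.
`∫ ψ f dμ = ∫ ⟨G, Df⟩ dμ` for all `f ∈ 𝓕C_b¹` (note `⟨G z, Df z⟩ = ∑ j g_j(z) ∂f/∂(lv j)(z)`). -/
def IsDstar {E H : Type*} [NormedAddCommGroup E] [NormedSpace ℝ E] [MeasurableSpace E]
    [NormedAddCommGroup H] [InnerProductSpace ℝ H]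
    (μ : Measure E) (ι : H →L[ℝ] E) {m : ℕ}
    (g : Fin m → E → ℝ) (lv : Fin m → H) (ψ : E → ℝ) : Prop :=
  Integrable ψ μ ∧
    ∀ f ∈ FCb1 E, ∫ z, ψ z * f z ∂μ = ∫ z, ∑ j, g j z * dirDeriv f (ι (lv j)) z ∂μ

/-- The set of numbers `∫ D*G ρ dμ` over test vector fields
`G ∈ (𝓕C_b¹)_{Q^{1/2}(H)∩H₁}` with `‖G(z)‖_{H₁} ≤ 1` for all `z`. -/
def Vset {E H : Type*} [NormedAddCommGroup E] [NormedSpace ℝ E] [MeasurableSpace E]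
    [NormedAddCommGroup H] [InnerProductSpace ℝ H]
    (μ : Measure E) (ι : H →L[ℝ] E) (sqrtQ : H →L[ℝ] H) (c : ℕ → ℝ) (e : ℕ → H)
    (ρ : E → ℝ) : Set ℝ :=
  {r | ∃ (m : ℕ) (g : Fin m → E → ℝ) (lv : Fin m → H) (ψ : E → ℝ),
      (∀ j, g j ∈ FCb1 E) ∧ (∀ j, lv j ∈ Set.range sqrtQ) ∧ (∀ j, memH1 c e (lv j)) ∧
      (∀ z, normH1sq c e (∑ j, g j z • lv j) ≤ 1) ∧
      IsDstar μ ι g lv ψ ∧ r = ∫ z, ψ z * ρ z ∂μ}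

/-- `V(ρ)`, the total variation of `ρ`. -/
def Vtotal {E H : Type*} [NormedAddCommGroup E] [NormedSpace ℝ E] [MeasurableSpace E]
    [NormedAddCommGroup H] [InnerProductSpace ℝ H]
    (μ : Measure E) (ι : H →L[ℝ] E) (sqrtQ : H →L[ℝ] H) (c : ℕ → ℝ) (e : ℕ → H)
    (ρ : E → ℝ) : ℝ :=
  sSup (Vset μ ι sqrtQ c e ρ)

/-- `ρ ∈ BV(H, H₁)` : `ρ ∈ L²(E,μ)` and `V(ρ) < ∞`. -/
def IsBV {E H : Type*} [NormedAddCommGroup E] [NormedSpace ℝ E] [MeasurableSpace E]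
    [NormedAddCommGroup H] [InnerProductSpace ℝ H]
    (μ : Measure E) (ι : H →L[ℝ] E) (sqrtQ : H →L[ℝ] H) (c : ℕ → ℝ) (e : ℕ → H)
    (ρ : E → ℝ) : Prop :=
  MemLp ρ 2 μ ∧ BddAbove (Vset μ ι sqrtQ c e ρ)

/-- `ρ ∈ BV_l(E)` (with `v ∈ E` the direction corresponding to `l ∈ E*`):
`|∫ ∂u/∂l ρ dμ| ≤ C ‖u‖_∞` for all `u ∈ 𝓕C_b¹`. -/
def IsBVl {E : Type*} [NormedAddCommGroup E] [NormedSpace ℝ E] [MeasurableSpace E]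
    (μ : Measure E) (v : E) (ρ : E → ℝ) : Prop :=
  ∃ C > 0, ∀ u ∈ FCb1 E, ∀ M : ℝ, (∀ z, |u z| ≤ M) →
    |∫ z, dirDeriv u v z * ρ z ∂μ| ≤ C * M

/-- Integral of `f` against a signed measure, via the Jordan decomposition. -/
def sintegral {E : Type*} [MeasurableSpace E] (ν : SignedMeasure E) (f : E → ℝ) : ℝ :=
  (∫ z, f z ∂ν.toJordanDecomposition.posPart) - ∫ z, f z ∂ν.toJordanDecomposition.negPart

/-- The topological support of a measure. -/
def msupport {E : Type*} [TopologicalSpace E] [MeasurableSpace E] (ν : Measure E) : Set E :=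
  {x | ∀ U : Set E, IsOpen U → x ∈ U → 0 < ν U}

/-- The `L²(μ)`-norm. -/
def L2norm {E : Type*} [MeasurableSpace E] (μ : Measure E) (f : E → ℝ) : ℝ :=
  Real.sqrt (∫ z, (f z) ^ 2 ∂μ)


section AuxLemmas

variable {E : Type*} [NormedAddCommGroup E] [NormedSpace ℝ E]

lemma cylinder_hasDerivAt {m : ℕ} (l : Fin m → (E →L[ℝ] ℝ)) {f : (Fin m → ℝ) → ℝ}
    (hf : ContDiff ℝ 1 f) (v z : E) :
    HasDerivAt (fun s : ℝ => f (fun i => l i (z + s • v)))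
      (fderiv ℝ f (fun i => l i z) (fun i => l i v)) 0 := by
  have h1 : HasDerivAt (fun s : ℝ => (fun i => l i (z + s • v))) (fun i => l i v) 0 := by
    rw [hasDerivAt_pi]
    intro i
    have heq : (fun s : ℝ => l i (z + s • v)) = fun s : ℝ => l i z + s * l i v := by
      funext s; simp [map_add, _root_.map_smul, smul_eq_mul]
    rw [heq]
    exact (hasDerivAt_mul_const (l i v)).const_add (l i z)
  have h2 : HasFDerivAt f (fderiv ℝ f (fun i => l i z)) (fun i => l i (z + (0:ℝ) • v)) := by
    simpa using ((hf.differentiable one_ne_zero) _).hasFDerivAt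
  simpa [Function.comp_def] using h2.comp_hasDerivAt 0 h1

lemma FCb1.hasDerivAt_line {u : E → ℝ} (hu : u ∈ FCb1 E) (v z : E) :
    HasDerivAt (fun s : ℝ => u (z + s • v)) (dirDeriv u v z) 0 := by
  obtain ⟨m, l, f, hf, _, _, hrep⟩ := hu
  have heq : (fun s : ℝ => u (z + s • v)) = fun s => f (fun i => l i (z + s • v)) :=
    funext fun s => hrep _
  have h : HasDerivAt (fun s : ℝ => u (z + s • v))
      (fderiv ℝ f (fun i => l i z) (fun i => l i v)) 0 := by
    rw [heq]; exact cylinder_hasDerivAt l hf v z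
  have hd : dirDeriv u v z = fderiv ℝ f (fun i => l i z) (fun i => l i v) := h.deriv
  rw [hd]; exact h

lemma FCb1.dirDeriv_eq {u : E → ℝ} (hu : u ∈ FCb1 E) (v : E) :
    ∃ (m : ℕ) (l : Fin m → (E →L[ℝ] ℝ)) (f : (Fin m → ℝ) → ℝ),
      ContDiff ℝ 1 f ∧ (∃ C, ∀ x, ‖fderiv ℝ f x‖ ≤ C) ∧
      ∀ z, dirDeriv u v z = fderiv ℝ f (fun i => l i z) (fun i => l i v) := by
  obtain ⟨m, l, f, hf, _, hC', hrep⟩ := hu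
  refine ⟨m, l, f, hf, hC', fun z => ?_⟩
  have heq : (fun s : ℝ => u (z + s • v)) = fun s => f (fun i => l i (z + s • v)) :=
    funext fun s => hrep _
  have h : HasDerivAt (fun s : ℝ => u (z + s • v))
      (fderiv ℝ f (fun i => l i z) (fun i => l i v)) 0 := by
    rw [heq]; exact cylinder_hasDerivAt l hf v z
  exact h.deriv

lemma FCb1.dirDeriv_continuous {u : E → ℝ} (hu : u ∈ FCb1 E) (v : E) :
    Continuous (fun z => dirDeriv u v z) := by
  obtain ⟨m, l, f, hf, _, hkey⟩ := FCb1.dirDeriv_eq hu v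
  have : (fun z => dirDeriv u v z)
      = fun z => fderiv ℝ f (fun i => l i z) (fun i => l i v) := funext hkey
  rw [this]
  exact ((hf.continuous_fderiv one_ne_zero).comp
    (continuous_pi fun i => (l i).continuous)).clm_apply continuous_const

lemma FCb1.dirDeriv_bounded {u : E → ℝ} (hu : u ∈ FCb1 E) (v : E) :
    ∃ C, ∀ z, |dirDeriv u v z| ≤ C := by
  obtain ⟨m, l, f, _, ⟨C', hC'⟩, hkey⟩ := FCb1.dirDeriv_eq hu v
  refine ⟨C' * ‖fun i => l i v‖, fun z => ?_⟩
  rw [hkey z, ← Real.norm_eq_abs]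
  calc ‖fderiv ℝ f (fun i => l i z) (fun i => l i v)‖
      ≤ ‖fderiv ℝ f (fun i => l i z)‖ * ‖fun i => l i v‖ :=
        ContinuousLinearMap.le_opNorm _ _
    _ ≤ C' * ‖fun i => l i v‖ :=
        mul_le_mul_of_nonneg_right (hC' _) (norm_nonneg _)

lemma FCb1.continuous {u : E → ℝ} (hu : u ∈ FCb1 E) : Continuous u := by
  obtain ⟨m, l, f, hf, _, _, hrep⟩ := hu
  have : u = fun z => f (fun i => l i z) := funext hrep
  rw [this]
  exact hf.continuous.comp (continuous_pi fun i => (l i).continuous)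

lemma FCb1.bounded {u : E → ℝ} (hu : u ∈ FCb1 E) : ∃ C, ∀ z, |u z| ≤ C := by
  obtain ⟨m, l, f, _, ⟨C, hC⟩, _, hrep⟩ := hu
  exact ⟨C, fun z => by rw [hrep z]; exact hC _⟩

lemma FCb1.const_mul {u : E → ℝ} (hu : u ∈ FCb1 E) (t : ℝ) :
    (fun z => t * u z) ∈ FCb1 E := by
  obtain ⟨m, l, f, hf, ⟨C, hC⟩, ⟨C', hC'⟩, hrep⟩ := hu
  refine ⟨m, l, fun x => t * f x, contDiff_const.mul hf, ⟨|t| * C, fun x => ?_⟩,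
    ⟨|t| * C', fun x => ?_⟩, fun z => by show t * u z = _; rw [hrep z]⟩
  · rw [abs_mul]
    exact mul_le_mul_of_nonneg_left (hC x) (abs_nonneg t)
  · rw [fderiv_const_mul ((hf.differentiable one_ne_zero) x) t, norm_smul, Real.norm_eq_abs]
    exact mul_le_mul_of_nonneg_left (hC' x) (abs_nonneg t)

lemma FCb1.mul {u w : E → ℝ} (hu : u ∈ FCb1 E) (hw : w ∈ FCb1 E) :
    (fun z => u z * w z) ∈ FCb1 E := by
  obtain ⟨m₁, l₁, f₁, hf₁, ⟨C₁, hC₁⟩, ⟨C₁', hC₁'⟩, hrep₁⟩ := hu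
  obtain ⟨m₂, l₂, f₂, hf₂, ⟨C₂, hC₂⟩, ⟨C₂', hC₂'⟩, hrep₂⟩ := hw
  have hC₁0 : 0 ≤ C₁ := le_trans (abs_nonneg _) (hC₁ 0)
  have hC₂0 : 0 ≤ C₂ := le_trans (abs_nonneg _) (hC₂ 0)
  set P₁ : (Fin (m₁ + m₂) → ℝ) →L[ℝ] (Fin m₁ → ℝ) :=
    ContinuousLinearMap.pi fun i => ContinuousLinearMap.proj (Fin.castAdd m₂ i) with hP₁
  set P₂ : (Fin (m₁ + m₂) → ℝ) →L[ℝ] (Fin m₂ → ℝ) :=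
    ContinuousLinearMap.pi fun i => ContinuousLinearMap.proj (Fin.natAdd m₁ i) with hP₂
  have hP₁le : ∀ x, ‖P₁ x‖ ≤ ‖x‖ := fun x => by
    rw [pi_norm_le_iff_of_nonneg (norm_nonneg x)]
    intro i; exact norm_le_pi_norm x _
  have hP₂le : ∀ x, ‖P₂ x‖ ≤ ‖x‖ := fun x => by
    rw [pi_norm_le_iff_of_nonneg (norm_nonneg x)]
    intro i; exact norm_le_pi_norm x _
  have hcomp₁ : ∀ (A : (Fin m₁ → ℝ) →L[ℝ] ℝ), ‖A.comp P₁‖ ≤ ‖A‖ := fun A =>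
    ContinuousLinearMap.opNorm_le_bound _ (norm_nonneg A) fun x =>
      le_trans (A.le_opNorm _) (mul_le_mul_of_nonneg_left (hP₁le x) (norm_nonneg A))
  have hcomp₂ : ∀ (A : (Fin m₂ → ℝ) →L[ℝ] ℝ), ‖A.comp P₂‖ ≤ ‖A‖ := fun A =>
    ContinuousLinearMap.opNorm_le_bound _ (norm_nonneg A) fun x =>
      le_trans (A.le_opNorm _) (mul_le_mul_of_nonneg_left (hP₂le x) (norm_nonneg A))
  refine ⟨m₁ + m₂, Fin.append l₁ l₂, fun x => f₁ (P₁ x) * f₂ (P₂ x),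
    (hf₁.comp P₁.contDiff).mul (hf₂.comp P₂.contDiff), ⟨C₁ * C₂, fun x => ?_⟩,
    ⟨C₁ * C₂' + C₂ * C₁', fun x => ?_⟩, fun z => ?_⟩
  · rw [abs_mul]
    exact mul_le_mul (hC₁ _) (hC₂ _) (abs_nonneg _) hC₁0
  · have d₁ : HasFDerivAt (fun x => f₁ (P₁ x)) ((fderiv ℝ f₁ (P₁ x)).comp P₁) x :=
      ((hf₁.differentiable one_ne_zero) (P₁ x)).hasFDerivAt.comp x P₁.hasFDerivAt
    have d₂ : HasFDerivAt (fun x => f₂ (P₂ x)) ((fderiv ℝ f₂ (P₂ x)).comp P₂) x :=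
      ((hf₂.differentiable one_ne_zero) (P₂ x)).hasFDerivAt.comp x P₂.hasFDerivAt
    have hd : HasFDerivAt (fun x => f₁ (P₁ x) * f₂ (P₂ x))
        (f₁ (P₁ x) • (fderiv ℝ f₂ (P₂ x)).comp P₂ + f₂ (P₂ x) • (fderiv ℝ f₁ (P₁ x)).comp P₁) x :=
      d₁.mul d₂
    rw [hd.fderiv]
    calc ‖f₁ (P₁ x) • (fderiv ℝ f₂ (P₂ x)).comp P₂ + f₂ (P₂ x) • (fderiv ℝ f₁ (P₁ x)).comp P₁‖
        ≤ ‖f₁ (P₁ x) • (fderiv ℝ f₂ (P₂ x)).comp P₂‖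
          + ‖f₂ (P₂ x) • (fderiv ℝ f₁ (P₁ x)).comp P₁‖ := norm_add_le _ _
      _ ≤ C₁ * C₂' + C₂ * C₁' := by
          gcongr
          · refine le_trans (ContinuousLinearMap.opNorm_smul_le _ _) ?_
            rw [Real.norm_eq_abs]
            exact mul_le_mul (hC₁ _) (le_trans (hcomp₂ _) (hC₂' _)) (norm_nonneg _) hC₁0
          · refine le_trans (ContinuousLinearMap.opNorm_smul_le _ _) ?_
            rw [Real.norm_eq_abs]
            exact mul_le_mul (hC₂ _) (le_trans (hcomp₁ _) (hC₁' _)) (norm_nonneg _) hC₂0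
  · show u z * w z = _
    rw [hrep₁ z, hrep₂ z]
    congr 1
    · congr 1; funext i
      simp [hP₁, Fin.append_left]
    · congr 1; funext i
      simp [hP₂, Fin.append_right]

lemma dirDeriv_mul {u w : E → ℝ} (hu : u ∈ FCb1 E) (hw : w ∈ FCb1 E) (v z : E) :
    dirDeriv (fun z => u z * w z) v z
      = dirDeriv u v z * w z + u z * dirDeriv w v z := by
  have h := (FCb1.hasDerivAt_line hu v z).mul (FCb1.hasDerivAt_line hw v z)
  have h0 : dirDeriv (fun z => u z * w z) v z
      = deriv (fun s : ℝ => u (z + s • v) * w (z + s • v)) 0 := rfl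
  rw [h0, show (fun s : ℝ => u (z + s • v) * w (z + s • v))
      = (fun s : ℝ => u (z + s • v)) * (fun s : ℝ => w (z + s • v)) from rfl, h.deriv]
  simp

lemma dirDeriv_const_mul {u : E → ℝ} (hu : u ∈ FCb1 E) (t : ℝ) (v z : E) :
    dirDeriv (fun z => t * u z) v z = t * dirDeriv u v z := by
  have h := (FCb1.hasDerivAt_line hu v z).const_mul t
  have h0 : dirDeriv (fun z => t * u z) v z
      = deriv (fun s : ℝ => t * u (z + s • v)) 0 := rfl
  rw [h0, h.deriv]

lemma normH1sq_smul {H : Type*} [NormedAddCommGroup H] [InnerProductSpace ℝ H]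
    (c : ℕ → ℝ) (e : ℕ → H) (a : ℝ) (x : H) :
    normH1sq c e (a • x) = a ^ 2 * normH1sq c e x := by
  unfold normH1sq
  rw [← tsum_mul_left]
  exact tsum_congr fun j => by rw [real_inner_smul_left]; ring

lemma normH1sq_nonneg {H : Type*} [NormedAddCommGroup H] [InnerProductSpace ℝ H]
    (c : ℕ → ℝ) (e : ℕ → H) (x : H) : 0 ≤ normH1sq c e x :=
  tsum_nonneg fun j => mul_nonneg (sq_nonneg _) (sq_nonneg _)

lemma integrable_of_bounded {E : Type*} [NormedAddCommGroup E] [NormedSpace ℝ E]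
    [MeasurableSpace E] [OpensMeasurableSpace E] {μ : MeasureTheory.Measure E}
    [IsFiniteMeasure μ] {f : E → ℝ} (hc : Continuous f) (C : ℝ) (hC : ∀ z, |f z| ≤ C) :
    Integrable f μ :=
  Integrable.mono' (integrable_const C) hc.aestronglyMeasurable
    (ae_of_all _ fun z => by rw [Real.norm_eq_abs]; exact hC z)

end AuxLemmas

/-- Theorem 3.2 (i): `BV(H,H₁) ⊆ ⋂ BV_l(E)`, with the explicit bound. -/
theorem stmt1 {E H : Type*} [NormedAddCommGroup E] [NormedSpace ℝ E] [CompleteSpace E]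
    [SecondCountableTopology E] [MeasurableSpace E] [BorelSpace E]
    [NormedAddCommGroup H] [InnerProductSpace ℝ H] [CompleteSpace H]
    [SecondCountableTopology H]
    (μ : Measure E) [IsFiniteMeasure μ] (hμ0 : μ ≠ 0)
    (ι : H →L[ℝ] E) (hinj : Function.Injective ι) (hdense : DenseRange ι)
    (Q sqrtQ : H →L[ℝ] H) (e : ℕ → H) (lam : ℕ → ℝ) (β : H → E → ℝ)
    (hyp : Hyp22 μ ι Q sqrtQ e lam β)
    (c : ℕ → ℝ) (hc : ∀ j, 1 ≤ c j)
    (ρ : E → ℝ) (hρmeas : Measurable ρ) (hρBV : IsBV μ ι sqrtQ c e ρ)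
    (hl : H) (hlQ : hl ∈ Set.range sqrtQ) (hlH1 : memH1 c e hl)
    (l : E →L[ℝ] ℝ) (hrep : ∀ h : H, ⟪hl, h⟫ = l (ι h)) :
    IsBVl μ (ι hl) ρ ∧
      ∀ g ∈ FCb1 E, ∀ M : ℝ, (∀ z, |g z| ≤ M) →
        |∫ z, dirDeriv g (ι hl) z * ρ z ∂μ| ≤
          (Vtotal μ ι sqrtQ c e ρ * Real.sqrt (normH1sq c e hl) +
            L2norm μ ρ * L2norm μ (β hl)) * M := by
  classical
  have hβld : IsLogDeriv μ (ι hl) (β hl) := hyp.logDeriv hl hlQ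
  have hβ2 : MemLp (β hl) 2 μ := hyp.logDeriv_L2 hl hlQ
  have hρ2 : MemLp ρ 2 μ := hρBV.1
  have hρint : Integrable ρ μ := hρ2.integrable one_le_two
  have hβint : Integrable (β hl) μ := hβld.1
  have hβρ_int : Integrable (fun z => β hl z * ρ z) μ := by
    refine Integrable.mono' ((hβ2.integrable_sq.add hρ2.integrable_sq).div_const 2)
      (hβ2.aestronglyMeasurable.mul hρ2.aestronglyMeasurable) (ae_of_all _ fun z => ?_)
    simp only [Pi.add_apply]
    rw [Real.norm_eq_abs, abs_mul]
    nlinarith [sq_nonneg (|β hl z| - |ρ z|), sq_abs (β hl z), sq_abs (ρ z),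
      abs_nonneg (β hl z), abs_nonneg (ρ z)]
  have hL2ρ : 0 ≤ L2norm μ ρ := Real.sqrt_nonneg _
  have hL2β : 0 ≤ L2norm μ (β hl) := Real.sqrt_nonneg _
  have hNnn : 0 ≤ normH1sq c e hl := normH1sq_nonneg c e hl
  set N := Real.sqrt (normH1sq c e hl) with hNdef
  have hN0 : 0 ≤ N := Real.sqrt_nonneg _
  have hNsq : N ^ 2 = normH1sq c e hl := Real.sq_sqrt hNnn
  set V := Vtotal μ ι sqrtQ c e ρ with hVdef
  have hCS : ∫ z, |β hl z| * |ρ z| ∂μ ≤ L2norm μ (β hl) * L2norm μ ρ := by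
    have hpq : Real.HolderConjugate 2 2 := ⟨by norm_num, by norm_num, by norm_num⟩
    have h2 : (ENNReal.ofReal 2) = (2 : ℝ≥0∞) := by
      rw [show (2:ℝ) = ((2:ℕ):ℝ) by norm_num, ENNReal.ofReal_natCast]
      norm_num
    have hβa : MemLp (fun z => |β hl z|) (ENNReal.ofReal 2) μ := by
      rw [h2]; simpa [Real.norm_eq_abs] using hβ2.norm
    have hρa : MemLp (fun z => |ρ z|) (ENNReal.ofReal 2) μ := by
      rw [h2]; simpa [Real.norm_eq_abs] using hρ2.norm
    have h := integral_mul_le_Lp_mul_Lq_of_nonneg hpq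
      (ae_of_all _ fun z => abs_nonneg (β hl z)) (ae_of_all _ fun z => abs_nonneg (ρ z)) hβa hρa
    have e1 : ∀ x : ℝ, |x| ^ (2:ℝ) = x ^ 2 := fun x => by
      rw [show (2:ℝ) = ((2:ℕ):ℝ) by norm_num, Real.rpow_natCast, sq_abs]
    simp only [e1] at h
    unfold L2norm
    rw [Real.sqrt_eq_rpow, Real.sqrt_eq_rpow]
    exact h
  have hV0 : 0 ≤ V := by
    refine le_csSup hρBV.2 ?_
    refine ⟨0, fun j => j.elim0, fun j => j.elim0, fun _ => 0, fun j => j.elim0,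
      fun j => j.elim0, fun j => j.elim0, fun z => ?_,
      ⟨integrable_zero _ _ _, fun f hf => by simp⟩, by simp⟩
    simp [normH1sq, inner_zero_left]
  set K := V * N + L2norm μ ρ * L2norm μ (β hl) with hK
  have hK0 : 0 ≤ K := add_nonneg (mul_nonneg hV0 hN0) (mul_nonneg hL2ρ hL2β)
  have hmem : ∀ g' ∈ FCb1 E, (∀ z, (g' z) ^ 2 * normH1sq c e hl ≤ 1) →
      ∫ z, (-(dirDeriv g' (ι hl) z + g' z * β hl z)) * ρ z ∂μ ≤ V := by
    intro g' hg' hbd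
    refine le_csSup hρBV.2 ?_
    obtain ⟨Cd, hCd⟩ := FCb1.dirDeriv_bounded hg' (ι hl)
    obtain ⟨Cg, hCg⟩ := FCb1.bounded hg'
    have hCd0 : 0 ≤ Cd := le_trans (abs_nonneg _) (hCd 0)
    have hCg0 : 0 ≤ Cg := le_trans (abs_nonneg _) (hCg 0)
    have hdcont := FCb1.dirDeriv_continuous hg' (ι hl)
    have hgcont := FCb1.continuous hg'
    have idd : Integrable (fun z => dirDeriv g' (ι hl) z) μ :=
      integrable_of_bounded hdcont Cd hCd
    have igb : Integrable (fun z => g' z * β hl z) μ :=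
      hβint.bdd_mul hgcont.aestronglyMeasurable
        (ae_of_all _ fun z => by rw [Real.norm_eq_abs]; exact hCg z)
    have iψ : Integrable (fun z => -(dirDeriv g' (ι hl) z + g' z * β hl z)) μ :=
      (idd.add igb).neg
    refine ⟨1, fun _ => g', fun _ => hl, fun z => -(dirDeriv g' (ι hl) z + g' z * β hl z),
      fun _ => hg', fun _ => hlQ, fun _ => hlH1, fun z => ?_, ⟨iψ, ?_⟩, rfl⟩
    · rw [Fin.sum_univ_one]
      calc normH1sq c e (g' z • hl) = (g' z) ^ 2 * normH1sq c e hl := normH1sq_smul c e _ hl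
        _ ≤ 1 := hbd z
    · intro f hf
      have hprod : (fun z => f z * g' z) ∈ FCb1 E := FCb1.mul hf hg'
      obtain ⟨Cf, hCf⟩ := FCb1.bounded hf
      obtain ⟨Cfd, hCfd⟩ := FCb1.dirDeriv_bounded hf (ι hl)
      have hCf0 : 0 ≤ Cf := le_trans (abs_nonneg _) (hCf 0)
      have hCfd0 : 0 ≤ Cfd := le_trans (abs_nonneg _) (hCfd 0)
      have hfcont := FCb1.continuous hf
      have hfdcont := FCb1.dirDeriv_continuous hf (ι hl)
      have i1 : Integrable (fun z => dirDeriv f (ι hl) z * g' z) μ :=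
        integrable_of_bounded (hfdcont.mul hgcont) (Cfd * Cg) fun z => by
          rw [abs_mul]; exact mul_le_mul (hCfd z) (hCg z) (abs_nonneg _) hCfd0
      have i2 : Integrable (fun z => f z * dirDeriv g' (ι hl) z) μ :=
        integrable_of_bounded (hfcont.mul hdcont) (Cf * Cd) fun z => by
          rw [abs_mul]; exact mul_le_mul (hCf z) (hCd z) (abs_nonneg _) hCf0
      have i3 : Integrable (fun z => f z * (g' z * β hl z)) μ :=
        igb.bdd_mul hfcont.aestronglyMeasurable
          (ae_of_all _ fun z => by rw [Real.norm_eq_abs]; exact hCf z)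
      have hibp := hβld.2 (fun z => f z * g' z) hprod
      have hibp2 : (∫ z, dirDeriv f (ι hl) z * g' z ∂μ)
          + ∫ z, f z * dirDeriv g' (ι hl) z ∂μ
          = -∫ z, f z * (g' z * β hl z) ∂μ := by
        have hA : ∫ z, dirDeriv (fun z => f z * g' z) (ι hl) z ∂μ
            = ∫ z, (dirDeriv f (ι hl) z * g' z + f z * dirDeriv g' (ι hl) z) ∂μ :=
          integral_congr_ae (ae_of_all _ fun z => dirDeriv_mul hf hg' (ι hl) z)
        have hB : ∫ z, (f z * g' z) * β hl z ∂μ = ∫ z, f z * (g' z * β hl z) ∂μ :=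
          integral_congr_ae (ae_of_all _ fun z => by ring)
        rw [← hB, ← integral_add i1 i2, ← hA]
        exact hibp
      have hL : ∫ z, (-(dirDeriv g' (ι hl) z + g' z * β hl z)) * f z ∂μ
          = -(∫ z, f z * dirDeriv g' (ι hl) z ∂μ) - ∫ z, f z * (g' z * β hl z) ∂μ := by
        rw [show (fun z => (-(dirDeriv g' (ι hl) z + g' z * β hl z)) * f z)
            = fun z => -(f z * dirDeriv g' (ι hl) z + f z * (g' z * β hl z)) from
          funext fun z => by ring]
        rw [integral_neg, integral_add i2 i3]
        ring
      have hR : ∫ z, (∑ _j : Fin 1, g' z * dirDeriv f (ι hl) z) ∂μ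
          = ∫ z, dirDeriv f (ι hl) z * g' z ∂μ :=
        integral_congr_ae (ae_of_all _ fun z => by simp only [Fin.sum_univ_one]; ring)
      calc ∫ z, (-(dirDeriv g' (ι hl) z + g' z * β hl z)) * f z ∂μ
          = -(∫ z, f z * dirDeriv g' (ι hl) z ∂μ)
            - ∫ z, f z * (g' z * β hl z) ∂μ := hL
        _ = ∫ z, dirDeriv f (ι hl) z * g' z ∂μ := by linarith
        _ = ∫ z, (∑ _j : Fin 1, g' z * dirDeriv f (ι hl) z) ∂μ := hR.symm
  have main : ∀ g ∈ FCb1 E, ∀ M : ℝ, (∀ z, |g z| ≤ M) →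
      |∫ z, dirDeriv g (ι hl) z * ρ z ∂μ| ≤ K * M := by
    intro g hg M hM
    have hM0 : 0 ≤ M := le_trans (abs_nonneg _) (hM 0)
    have hgcont := FCb1.continuous hg
    rcases eq_or_ne hl 0 with h0 | h0
    · have hdz : ∀ z, dirDeriv g (ι hl) z = 0 := fun z => by
        rw [h0]; simp [dirDeriv, map_zero]
      have hz : ∫ z, dirDeriv g (ι hl) z * ρ z ∂μ = 0 := by
        rw [show (fun z => dirDeriv g (ι hl) z * ρ z) = fun _ => (0:ℝ) from
          funext fun z => by rw [hdz z, zero_mul]]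
        exact integral_zero _ _
      rw [hz, abs_zero]
      exact mul_nonneg hK0 hM0
    · have hpos : 0 < normH1sq c e hl := by
        have hle : ‖hl‖ ^ 2 ≤ normH1sq c e hl := by
          let b : HilbertBasis ℕ ℝ H := HilbertBasis.mk hyp.ortho (le_of_eq hyp.total.symm)
          have hcoe : ⇑b = e := HilbertBasis.coe_mk _ _
          have hpars : ∑' j, (⟪hl, e j⟫ : ℝ) ^ 2 = ‖hl‖ ^ 2 := by
            have h := b.tsum_inner_mul_inner hl hl
            rw [hcoe] at h
            calc ∑' j, (⟪hl, e j⟫ : ℝ) ^ 2 = ∑' j, (⟪hl, e j⟫ : ℝ) * ⟪e j, hl⟫ :=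
                tsum_congr fun j => by rw [sq, real_inner_comm (e j) hl]
              _ = ⟪hl, hl⟫ := h
              _ = ‖hl‖ ^ 2 := real_inner_self_eq_norm_sq hl
          rw [← hpars]
          refine Summable.tsum_le_tsum (fun j => ?_)
            (Summable.of_nonneg_of_le (fun j => sq_nonneg _) (fun j => ?_) hlH1) hlH1
          · have h1 : 1 ≤ (c j) ^ 2 := by nlinarith [hc j]
            nlinarith [sq_nonneg (⟪hl, e j⟫ : ℝ), h1]
          · have h1 : 1 ≤ (c j) ^ 2 := by nlinarith [hc j]
            nlinarith [sq_nonneg (⟪hl, e j⟫ : ℝ), h1]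
        have hn : 0 < ‖hl‖ := norm_pos_iff.mpr h0
        nlinarith
      have hNpos : 0 < N := Real.sqrt_pos.mpr hpos
      rcases eq_or_lt_of_le hM0 with hMeq | hMpos
      · have hg0 : ∀ z, g z = 0 := fun z =>
          abs_eq_zero.mp (le_antisymm (by simpa [← hMeq] using hM z) (abs_nonneg _))
        have hdz : ∀ z, dirDeriv g (ι hl) z = 0 := fun z => by
          have hfe : (fun s : ℝ => g (z + s • ι hl)) = fun _ => (0:ℝ) :=
            funext fun s => hg0 _
          rw [dirDeriv, hfe, deriv_const]
        have hz : ∫ z, dirDeriv g (ι hl) z * ρ z ∂μ = 0 := by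
          rw [show (fun z => dirDeriv g (ι hl) z * ρ z) = fun _ => (0:ℝ) from
            funext fun z => by rw [hdz z, zero_mul]]
          exact integral_zero _ _
        rw [hz, abs_zero]
        exact mul_nonneg hK0 hM0
      · set t := (M * N)⁻¹ with htdef
        have hMN : 0 < M * N := mul_pos hMpos hNpos
        have htpos : 0 < t := inv_pos.mpr hMN
        have htMN : t * (M * N) = 1 := inv_mul_cancel₀ (ne_of_gt hMN)
        set I := ∫ z, (dirDeriv g (ι hl) z + g z * β hl z) * ρ z ∂μ with hI
        have hbdgen : ∀ s : ℝ, |s| = t → ∀ z, ((s * g z)) ^ 2 * normH1sq c e hl ≤ 1 := by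
          intro s hs z
          have h1 : |s * g z| ≤ t * M := by
            rw [abs_mul, hs]
            exact mul_le_mul_of_nonneg_left (hM z) htpos.le
          have h2 : (s * g z) ^ 2 ≤ (t * M) ^ 2 := by
            rw [← sq_abs]
            exact pow_le_pow_left₀ (abs_nonneg _) h1 2
          have h3 : (t * M) ^ 2 * normH1sq c e hl = (t * (M * N)) ^ 2 := by
            rw [← hNsq]; ring
          calc (s * g z) ^ 2 * normH1sq c e hl
              ≤ (t * M) ^ 2 * normH1sq c e hl := mul_le_mul_of_nonneg_right h2 hNnn
            _ = (t * (M * N)) ^ 2 := h3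
            _ = 1 := by rw [htMN]; norm_num
        have e1 : ∫ z, (-(dirDeriv (fun z => t * g z) (ι hl) z + (t * g z) * β hl z)) * ρ z ∂μ
            = (-t) * I := by
          rw [show (fun z => (-(dirDeriv (fun z => t * g z) (ι hl) z + (t * g z) * β hl z)) * ρ z)
              = fun z => (-t) * ((dirDeriv g (ι hl) z + g z * β hl z) * ρ z) from
            funext fun z => by rw [dirDeriv_const_mul hg t (ι hl) z]; ring]
          rw [integral_const_mul]
        have e2 : ∫ z, (-(dirDeriv (fun z => -t * g z) (ι hl) z + (-t * g z) * β hl z)) * ρ z ∂μ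
            = t * I := by
          rw [show (fun z => (-(dirDeriv (fun z => -t * g z) (ι hl) z + (-t * g z) * β hl z)) * ρ z)
              = fun z => t * ((dirDeriv g (ι hl) z + g z * β hl z) * ρ z) from
            funext fun z => by rw [dirDeriv_const_mul hg (-t) (ι hl) z]; ring]
          rw [integral_const_mul]
        have le1 : (-t) * I ≤ V := by
          rw [← e1]
          exact hmem (fun z => t * g z) (FCb1.const_mul hg t) (hbdgen t (abs_of_pos htpos))
        have le2 : t * I ≤ V := by
          rw [← e2]
          exact hmem (fun z => -t * g z) (FCb1.const_mul hg (-t))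
            (hbdgen (-t) (by rw [abs_neg]; exact abs_of_pos htpos))
        have hVI : |I| ≤ V * (M * N) := by
          rw [abs_le]
          constructor
          · nlinarith [mul_le_mul_of_nonneg_right le1 hMN.le]
          · nlinarith [mul_le_mul_of_nonneg_right le2 hMN.le]
        have idg : Integrable (fun z => dirDeriv g (ι hl) z * ρ z) μ := by
          obtain ⟨Cd, hCd⟩ := FCb1.dirDeriv_bounded hg (ι hl)
          exact hρint.bdd_mul (FCb1.dirDeriv_continuous hg (ι hl)).aestronglyMeasurable
            (ae_of_all _ fun z => by rw [Real.norm_eq_abs]; exact hCd z)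
        have igβρ : Integrable (fun z => g z * (β hl z * ρ z)) μ :=
          hβρ_int.bdd_mul hgcont.aestronglyMeasurable
            (ae_of_all _ fun z => by rw [Real.norm_eq_abs]; exact hM z)
        have hsplit : ∫ z, dirDeriv g (ι hl) z * ρ z ∂μ
            = I - ∫ z, g z * (β hl z * ρ z) ∂μ := by
          have hIsum : I = (∫ z, dirDeriv g (ι hl) z * ρ z ∂μ)
              + ∫ z, g z * (β hl z * ρ z) ∂μ := by
            rw [hI, show (fun z => (dirDeriv g (ι hl) z + g z * β hl z) * ρ z)
                = fun z => dirDeriv g (ι hl) z * ρ z + g z * (β hl z * ρ z) from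
              funext fun z => by ring]
            exact integral_add idg igβρ
          linarith
        have hgβρ : |∫ z, g z * (β hl z * ρ z) ∂μ| ≤ M * (L2norm μ (β hl) * L2norm μ ρ) := by
          have habs : |∫ z, g z * (β hl z * ρ z) ∂μ| ≤ ∫ z, |g z| * (|β hl z| * |ρ z|) ∂μ := by
            simpa [Real.norm_eq_abs, abs_mul] using
              norm_integral_le_integral_norm (μ := μ) (fun z => g z * (β hl z * ρ z))
          have hmono : ∫ z, |g z| * (|β hl z| * |ρ z|) ∂μ ≤ ∫ z, M * (|β hl z| * |ρ z|) ∂μ := by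
            refine integral_mono ?_ ?_ fun z => ?_
            · have hi := igβρ.abs
              simpa [abs_mul] using hi
            · have hi : Integrable (fun z => |β hl z| * |ρ z|) μ := by
                have := hβρ_int.abs
                simpa [abs_mul] using this
              exact hi.const_mul M
            · exact mul_le_mul_of_nonneg_right (hM z) (mul_nonneg (abs_nonneg _) (abs_nonneg _))
          calc |∫ z, g z * (β hl z * ρ z) ∂μ|
              ≤ ∫ z, M * (|β hl z| * |ρ z|) ∂μ := le_trans habs hmono
            _ = M * ∫ z, |β hl z| * |ρ z| ∂μ := integral_const_mul M _
            _ ≤ M * (L2norm μ (β hl) * L2norm μ ρ) := mul_le_mul_of_nonneg_left hCS hM0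
        rw [hsplit]
        calc |I - ∫ z, g z * (β hl z * ρ z) ∂μ|
            ≤ |I| + |∫ z, g z * (β hl z * ρ z) ∂μ| := abs_sub _ _
          _ ≤ V * (M * N) + M * (L2norm μ (β hl) * L2norm μ ρ) := add_le_add hVI hgβρ
          _ = K * M := by rw [hK]; ring
  refine ⟨⟨K + 1, by positivity, fun u hu M hM => ?_⟩, main⟩
  have hM0 : 0 ≤ M := le_trans (abs_nonneg _) (hM 0)
  calc |∫ z, dirDeriv u (ι hl) z * ρ z ∂μ| ≤ K * M := main u hu M hM
    _ ≤ (K + 1) * M := by nlinarith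

end
end

section
/- Let E be a real separable Banach space, γ a finite positive Borel measure on E, n ∈ ℕ, v₁,…,v_n ∈ L¹(E,γ), and V ≥ 0. Suppose that for all g₁,…,g_n ∈ 𝓕C_b¹ satisfying Σ_{j=1}^n g_j(z)² ≤ 1 for every z ∈ E one has Σ_{j=1}^n ∫_E g_j(z) v_j(z) γ(dz) ≤ V. Then ∫_E √(Σ_{j=1}^n v_j(z)²) γ(dz) ≤ V. -/
open MeasureTheory Filter
open scoped RealInnerProductSpace ENNReal

noncomputable section

open scoped NNReal BoundedContinuousFunction

namespace Stmt9Aux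


lemma sum_sq_le_sq_sum_abs {n : ℕ} (a : Fin n → ℝ) :
    ∑ j, a j ^ 2 ≤ (∑ j, |a j|) ^ 2 := by
  rw [sq, Finset.sum_mul]
  refine Finset.sum_le_sum fun i _ => ?_
  rw [← sq_abs, sq]
  exact mul_le_mul_of_nonneg_left
    (Finset.single_le_sum (f := fun j => |a j|) (fun j _ => abs_nonneg _) (Finset.mem_univ i))
    (abs_nonneg _)

lemma sqrt_sum_sq_le_sum_abs {n : ℕ} (a : Fin n → ℝ) :
    Real.sqrt (∑ j, a j ^ 2) ≤ ∑ j, |a j| := by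
  rw [show (∑ j, |a j|) = Real.sqrt ((∑ j, |a j|) ^ 2) from
    (Real.sqrt_sq (Finset.sum_nonneg fun j _ => abs_nonneg _)).symm]
  exact Real.sqrt_le_sqrt (sum_sq_le_sq_sum_abs a)

lemma abs_sqrt_sum_sq_sub_le {n : ℕ} (a b : Fin n → ℝ) :
    |Real.sqrt (∑ j, a j ^ 2) - Real.sqrt (∑ j, b j ^ 2)| ≤ ∑ j, |a j - b j| := by
  have ha : Real.sqrt (∑ j, a j ^ 2) = ‖(WithLp.equiv 2 (Fin n → ℝ)).symm a‖ := by
    rw [EuclideanSpace.norm_eq]; congr 1; refine Finset.sum_congr rfl fun j _ => ?_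
    rw [Real.norm_eq_abs, sq_abs]; rfl
  have hb : Real.sqrt (∑ j, b j ^ 2) = ‖(WithLp.equiv 2 (Fin n → ℝ)).symm b‖ := by
    rw [EuclideanSpace.norm_eq]; congr 1; refine Finset.sum_congr rfl fun j _ => ?_
    rw [Real.norm_eq_abs, sq_abs]; rfl
  rw [ha, hb]
  refine (abs_norm_sub_norm_le _ _).trans ?_
  have : ‖(WithLp.equiv 2 (Fin n → ℝ)).symm a - (WithLp.equiv 2 (Fin n → ℝ)).symm b‖
      = Real.sqrt (∑ j, (a j - b j) ^ 2) := by
    rw [EuclideanSpace.norm_eq]; congr 1; refine Finset.sum_congr rfl fun j _ => ?_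
    rw [Real.norm_eq_abs, sq_abs]; rfl
  rw [this]
  exact sqrt_sum_sq_le_sum_abs _

/-- Ulam tightness for a finite Borel measure on a complete separable metric space. -/
lemma exists_compact_compl_lt {E : Type*} [MetricSpace E] [CompleteSpace E] [Nonempty E]
    [SecondCountableTopology E] [MeasurableSpace E] [BorelSpace E]
    (μ : Measure E) [IsFiniteMeasure μ] {ε : ℝ≥0∞} (hε : ε ≠ 0) :
    ∃ K : Set E, IsCompact K ∧ μ Kᶜ < ε := by
  obtain ⟨x, hx⟩ := TopologicalSpace.exists_dense_seq E
  obtain ⟨δ, hδpos, hδsum⟩ := ENNReal.exists_pos_sum_of_countable hε ℕ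
  -- for each k, finite unions of closed balls of radius 1/(k+1)
  set S : ℕ → ℕ → Set E := fun k N => ⋃ i ∈ Finset.range N, Metric.closedBall (x i) (1/(k+1))
  have Sclosed : ∀ k N, IsClosed (S k N) := fun k N =>
    isClosed_biUnion_finset fun i _ => Metric.isClosed_closedBall
  have Smono : ∀ k, Monotone fun N => S k N := by
    intro k N M hNM
    intro z hz
    obtain ⟨i, hi, hzi⟩ := Set.mem_iUnion₂.1 hz
    exact Set.mem_iUnion₂.2
      ⟨i, Finset.mem_range.2 (lt_of_lt_of_le (Finset.mem_range.1 hi) hNM), hzi⟩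
  have Suniv : ∀ k, (⋃ N, S k N) = Set.univ := by
    intro k
    apply Set.eq_univ_of_forall
    intro z
    have hpos : (0:ℝ) < 1/(k+1) := by positivity
    obtain ⟨i, hi⟩ := (Metric.denseRange_iff.1 hx) z (1/(k+1)) hpos
    exact Set.mem_iUnion.2 ⟨i+1, Set.mem_biUnion (Finset.self_mem_range_succ i)
      (Metric.mem_closedBall.2 hi.le)⟩
  -- choose N k with small complement measure
  have key : ∀ k, ∃ N, μ (S k N)ᶜ < δ k := by
    intro k
    have h1 : Tendsto (fun N => μ (S k N)ᶜ) atTop (nhds (μ (⋂ N, (S k N)ᶜ))) := by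
      refine tendsto_measure_iInter_atTop (fun N => ((Sclosed k N).measurableSet.compl).nullMeasurableSet)
        (fun N M hNM => Set.compl_subset_compl.2 (Smono k hNM)) ⟨0, measure_ne_top μ _⟩
    have h2 : (⋂ N, (S k N)ᶜ) = ∅ := by
      rw [← Set.compl_iUnion, Suniv k, Set.compl_univ]
    rw [h2, measure_empty] at h1
    exact ((h1.eventually (gt_mem_nhds (show (0:ℝ≥0∞) < δ k from ENNReal.coe_pos.2 (hδpos k)))).exists).imp fun N hN => by
      simpa using hN
  choose N hN using key
  refine ⟨⋂ k, S k (N k), ?_, ?_⟩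
  · refine TotallyBounded.isCompact_of_isClosed ?_ (isClosed_iInter fun k => Sclosed k (N k))
    refine Metric.totallyBounded_iff.2 fun d hd => ?_
    obtain ⟨k, hk⟩ := exists_nat_gt (1/d)
    have hlt : 1/((k:ℝ)+1) < d := by
      rw [div_lt_iff₀ (by positivity)]
      rw [div_lt_iff₀ hd] at hk
      calc (1:ℝ) < k * d := hk
        _ ≤ d * (k+1) := by nlinarith
    refine ⟨(fun i => x i) '' (Finset.range (N k)), Set.Finite.image _ (Set.toFinite _), ?_⟩
    intro z hz
    have hz' : z ∈ S k (N k) := Set.mem_iInter.1 hz k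
    obtain ⟨i, hi, hzi⟩ := Set.mem_iUnion₂.1 hz'
    refine Set.mem_iUnion₂.2 ⟨x i, ⟨i, by simpa using hi, rfl⟩, ?_⟩
    exact Metric.mem_ball.2 (lt_of_le_of_lt (Metric.mem_closedBall.1 hzi) hlt)
  · rw [Set.compl_iInter]
    calc μ (⋃ k, (S k (N k))ᶜ) ≤ ∑' k, μ (S k (N k))ᶜ := measure_iUnion_le _
      _ ≤ ∑' k, (δ k : ℝ≥0∞) := ENNReal.tsum_le_tsum fun k => (hN k).le
      _ < ε := hδsum



/-- A `C¹` clamp: identity on `[-R,R]`, bounded by `2R`, derivative bounded by `1`. -/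
lemma exists_psi (R : ℝ) (hR : 0 < R) :
    ∃ ψ : ℝ → ℝ, ContDiff ℝ 1 ψ ∧ (∀ t, |t| ≤ R → ψ t = t) ∧ (∀ t, |ψ t| ≤ 2*R) ∧
      (∀ t, |deriv ψ t| ≤ 1) := by
  set θ : ℝ → ℝ := fun s => Real.smoothTransition (2 - s^2/R^2) with hθ
  have hθc : Continuous θ :=
    Real.smoothTransition.continuous.comp (by continuity)
  have hθ0 : ∀ s, 0 ≤ θ s := fun s => Real.smoothTransition.nonneg _
  have hθ1 : ∀ s, θ s ≤ 1 := fun s => Real.smoothTransition.le_one _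
  have hθid : ∀ s, |s| ≤ R → θ s = 1 := by
    intro s hs
    apply Real.smoothTransition.one_of_one_le
    have h1 : s^2 ≤ R^2 := by
      rw [← sq_abs s]
      exact pow_le_pow_left₀ (abs_nonneg s) hs 2
    have : s^2/R^2 ≤ 1 := by
      rw [div_le_one (by positivity)]; exact h1
    linarith
  have hθz : ∀ s, 2*R ≤ |s| → θ s = 0 := by
    intro s hs
    apply Real.smoothTransition.zero_of_nonpos
    have h1 : (2*R)^2 ≤ s^2 := by
      rw [← sq_abs s]
      exact pow_le_pow_left₀ (by positivity) hs 2
    have : (4:ℝ) ≤ s^2/R^2 := by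
      rw [le_div_iff₀ (by positivity)]; nlinarith
    linarith
  set ψ : ℝ → ℝ := fun t => ∫ s in (0:ℝ)..t, θ s with hψ
  have hint : ∀ a b : ℝ, IntervalIntegrable θ volume a b := fun a b =>
    hθc.intervalIntegrable a b
  have hderiv : ∀ t, HasDerivAt ψ (θ t) t := by
    intro t
    exact intervalIntegral.integral_hasDerivAt_right (hint 0 t)
      (hθc.stronglyMeasurable.stronglyMeasurableAtFilter) hθc.continuousAt
  have hdψ : deriv ψ = θ := funext fun t => (hderiv t).deriv
  have hψdiff : Differentiable ℝ ψ := fun t => (hderiv t).differentiableAt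
  have hψC1 : ContDiff ℝ 1 ψ := contDiff_one_iff_deriv.2 ⟨hψdiff, by rw [hdψ]; exact hθc⟩
  have hψ0 : ψ 0 = 0 := intervalIntegral.integral_same
  have hψid : ∀ t, |t| ≤ R → ψ t = t := by
    intro t ht
    have : ψ t = ∫ s in (0:ℝ)..t, (1:ℝ) := by
      refine intervalIntegral.integral_congr fun s hs => ?_
      apply hθid
      rcases Set.mem_uIcc.1 hs with ⟨h1, h2⟩ | ⟨h1, h2⟩
      · rw [abs_le]; constructor <;> [linarith [abs_nonneg t]; skip]
        rw [abs_le] at ht; exact le_trans h2 ht.2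
      · rw [abs_le]; rw [abs_le] at ht
        exact ⟨le_trans ht.1 h1, by linarith⟩
    simpa using this
  have hmono : Monotone ψ := by
    apply monotone_of_deriv_nonneg hψdiff
    intro t; rw [hdψ]; exact hθ0 t
  have hup : ∀ t, 0 ≤ t → ψ t ≤ 2*R := by
    intro t ht
    rcases le_or_gt t (2*R) with h | h
    · have : ψ t ≤ ∫ s in (0:ℝ)..t, (1:ℝ) := by
        apply intervalIntegral.integral_mono_on ht (hint 0 t)
          (intervalIntegrable_const) (fun s _ => hθ1 s)
      simpa using le_trans this (by simpa using h)
    · have hsplit : ψ (2*R) + ∫ s in (2*R)..t, θ s = ψ t :=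
        intervalIntegral.integral_add_adjacent_intervals (hint 0 (2*R)) (hint (2*R) t)
      have hzero : (∫ s in (2*R)..t, θ s) = 0 := by
        rw [show (0:ℝ) = ∫ s in (2*R)..t, (0:ℝ) by simp]
        refine intervalIntegral.integral_congr fun s hs => ?_
        rcases Set.mem_uIcc.1 hs with ⟨h1, h2⟩ | ⟨h1, h2⟩
        · refine hθz s ?_
          rw [abs_of_nonneg (by linarith : (0:ℝ) ≤ s)]; exact h1
        · linarith
      have h2R : ψ (2*R) ≤ 2*R := by
        have : ψ (2*R) ≤ ∫ s in (0:ℝ)..(2*R), (1:ℝ) :=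
          intervalIntegral.integral_mono_on (by positivity) (hint 0 (2*R))
            intervalIntegrable_const (fun s _ => hθ1 s)
        simpa using this
      rw [← hsplit, hzero]; simpa using h2R
  have hdown : ∀ t, t ≤ 0 → -(2*R) ≤ ψ t := by
    intro t ht
    rcases le_or_gt (-(2*R)) t with h | h
    · have h0 : (∫ s in t..(0:ℝ), θ s) ≤ ∫ s in t..(0:ℝ), (1:ℝ) :=
        intervalIntegral.integral_mono_on ht (hint t 0)
          intervalIntegrable_const (fun s _ => hθ1 s)
      have h1 : (∫ s in t..(0:ℝ), (1:ℝ)) = -t := by simp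
      have h2 : ψ t = -∫ s in t..(0:ℝ), θ s := intervalIntegral.integral_symm t 0
      rw [h2]; rw [h1] at h0; linarith
    · have hsplit : ψ (-(2*R)) + ∫ s in (-(2*R))..t, θ s = ψ t :=
        intervalIntegral.integral_add_adjacent_intervals (hint 0 (-(2*R))) (hint (-(2*R)) t)
      have hzero : (∫ s in (-(2*R))..t, θ s) = 0 := by
        rw [show (0:ℝ) = ∫ s in (-(2*R))..t, (0:ℝ) by simp]
        refine intervalIntegral.integral_congr fun s hs => ?_
        rcases Set.mem_uIcc.1 hs with ⟨h1, h2⟩ | ⟨h1, h2⟩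
        · linarith
        · refine hθz s ?_
          rw [abs_of_nonpos (by linarith : s ≤ 0)]; linarith
      have h2R : -(2*R) ≤ ψ (-(2*R)) := by
        have h0 : (∫ s in (-(2*R))..(0:ℝ), θ s) ≤ ∫ s in (-(2*R))..(0:ℝ), (1:ℝ) :=
          intervalIntegral.integral_mono_on (by linarith) (hint _ _)
            intervalIntegrable_const (fun s _ => hθ1 s)
        have h1 : (∫ s in (-(2*R))..(0:ℝ), (1:ℝ)) = 2*R := by simp
        have h2 : ψ (-(2*R)) = -∫ s in (-(2*R))..(0:ℝ), θ s :=
          intervalIntegral.integral_symm _ _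
        rw [h2]; rw [h1] at h0; linarith
      rw [← hsplit, hzero]; simpa using h2R
  refine ⟨ψ, hψC1, hψid, ?_, ?_⟩
  · intro t
    rcases le_or_gt 0 t with ht | ht
    · rw [abs_le]
      refine ⟨?_, hup t ht⟩
      have := hmono ht  -- ψ 0 ≤ ψ t
      rw [hψ0] at this; linarith
    · rw [abs_le]
      refine ⟨hdown t ht.le, ?_⟩
      have := hmono ht.le
      rw [hψ0] at this; linarith
  · intro t; rw [hdψ, abs_le]; exact ⟨by linarith [hθ0 t], hθ1 t⟩

/-- A `C¹` penalty function, zero on `(-∞, τ]`, nonnegative, and `≥ t - 1`. -/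
lemma exists_phi (τ : ℝ) (hτ : τ < 1) :
    ∃ φ : ℝ → ℝ, ContDiff ℝ 1 φ ∧ (∀ t, t ≤ τ → φ t = 0) ∧ (∀ t, 0 ≤ φ t) ∧
      (∀ t, t - 1 ≤ φ t) := by
  refine ⟨fun t => (t - τ) * Real.smoothTransition ((t - τ)/(1 - τ)), ?_, ?_, ?_, ?_⟩
  · exact (contDiff_id.sub contDiff_const).mul
      (Real.smoothTransition.contDiff.comp ((contDiff_id.sub contDiff_const).div_const _))
  · intro t ht
    show (t - τ) * Real.smoothTransition ((t - τ)/(1 - τ)) = 0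
    rw [Real.smoothTransition.zero_of_nonpos, mul_zero]
    apply div_nonpos_of_nonpos_of_nonneg <;> linarith
  · intro t
    show 0 ≤ (t - τ) * Real.smoothTransition ((t - τ)/(1 - τ))
    rcases le_or_gt t τ with ht | ht
    · rw [Real.smoothTransition.zero_of_nonpos, mul_zero]
      apply div_nonpos_of_nonpos_of_nonneg <;> linarith
    · exact mul_nonneg (by linarith) (Real.smoothTransition.nonneg _)
  · intro t
    show t - 1 ≤ (t - τ) * Real.smoothTransition ((t - τ)/(1 - τ))
    rcases le_or_gt t 1 with ht | ht
    · calc t - 1 ≤ 0 := by linarith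
        _ ≤ _ := by
          rcases le_or_gt t τ with h | h
          · rw [Real.smoothTransition.zero_of_nonpos, mul_zero]
            apply div_nonpos_of_nonpos_of_nonneg <;> linarith
          · exact mul_nonneg (by linarith) (Real.smoothTransition.nonneg _)
    · rw [Real.smoothTransition.one_of_one_le, mul_one]
      · linarith
      · rw [le_div_iff₀ (by linarith)]; linarith



lemma selContDiff {k M : ℕ} (φ : Fin k → Fin M) {F : (Fin k → ℝ) → ℝ}
    (hF : ContDiff ℝ 1 F) :
    ContDiff ℝ 1 (fun x : Fin M → ℝ => F (fun i => x (φ i))) :=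
  hF.comp (contDiff_pi.2 fun i => contDiff_apply (𝕜 := ℝ) (E := ℝ) (φ i) :
    ContDiff ℝ 1 (fun x : Fin M → ℝ => fun i => x (φ i)))

/-- Stone-Weierstrass: joint cylinder-function approximation of finitely many
continuous functions on a compact set. -/
lemma exists_cylinder_approx {E : Type*} [NormedAddCommGroup E] [NormedSpace ℝ E]
    {K : Set E} (hK : IsCompact K) {n : ℕ} (u : Fin n → E → ℝ) (hu : ∀ j, Continuous (u j))
    (ε : ℝ) (hε : 0 < ε) :
    ∃ (m : ℕ) (l : Fin m → (E →L[ℝ] ℝ)) (F : Fin n → (Fin m → ℝ) → ℝ),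
      (∀ j, ContDiff ℝ 1 (F j)) ∧ ∀ j, ∀ z ∈ K, |F j (fun i => l i z) - u j z| ≤ ε := by
  haveI : CompactSpace K := isCompact_iff_compactSpace.1 hK
  set S : Set C(K, ℝ) := {f | ∃ l : E →L[ℝ] ℝ, ∀ z : K, f z = l z} with hS
  set A : Subalgebra ℝ C(K, ℝ) := Algebra.adjoin ℝ S with hA
  have hsep : A.SeparatesPoints := by
    intro x y hxy
    have hne : (x : E) - (y : E) ≠ 0 := sub_ne_zero.2 fun h => hxy (Subtype.ext h)
    obtain ⟨l, -, hl⟩ := exists_dual_vector ℝ ((x : E) - (y : E)) (norm_ne_zero_iff.2 hne)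
    have hgA : (⟨fun z : K => l (z : E), l.continuous.comp continuous_subtype_val⟩ :
        C(K, ℝ)) ∈ A := Algebra.subset_adjoin ⟨l, fun z => rfl⟩
    refine ⟨_, Set.mem_image_of_mem _ hgA, ?_⟩
    show l (x : E) ≠ l (y : E)
    intro hEq
    have h0 : l ((x : E) - (y : E)) = 0 := by rw [map_sub, hEq, sub_self]
    rw [hl] at h0
    exact hne (by exact_mod_cast norm_eq_zero.1 (by exact_mod_cast h0))
  -- representation of elements of the adjoin as C¹ cylinder functions
  have repr : ∀ p ∈ A, ∃ (m : ℕ) (l : Fin m → (E →L[ℝ] ℝ)) (F : (Fin m → ℝ) → ℝ),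
      ContDiff ℝ 1 F ∧ ∀ z : K, p z = F (fun i => l i (z : E)) := by
    intro p hp
    induction hp using Algebra.adjoin_induction with
    | mem f hf =>
      obtain ⟨l, hl⟩ := hf
      exact ⟨1, fun _ => l, fun x => x 0,
        contDiff_apply (𝕜 := ℝ) (E := ℝ) (0 : Fin 1), fun z => hl z⟩
    | algebraMap r =>
      exact ⟨0, Fin.elim0, fun _ => r, contDiff_const, fun z => by simp⟩
    | add f g hf hg ihf ihg =>
      obtain ⟨m₁, l₁, F₁, hF₁, he₁⟩ := ihf
      obtain ⟨m₂, l₂, F₂, hF₂, he₂⟩ := ihg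
      refine ⟨m₁ + m₂, Fin.append l₁ l₂,
        fun x => F₁ (fun i => x (Fin.castAdd m₂ i)) + F₂ (fun i => x (Fin.natAdd m₁ i)),
        (selContDiff _ hF₁).add (selContDiff _ hF₂), fun z => ?_⟩
      have e1 : (fun i => Fin.append l₁ l₂ (Fin.castAdd m₂ i) (z : E)) =
          fun i => l₁ i (z : E) := by
        funext i; rw [Fin.append_left]
      have e2 : (fun i => Fin.append l₁ l₂ (Fin.natAdd m₁ i) (z : E)) =
          fun i => l₂ i (z : E) := by
        funext i; rw [Fin.append_right]
      simp only [ContinuousMap.add_apply, he₁ z, he₂ z, e1, e2]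
    | mul f g hf hg ihf ihg =>
      obtain ⟨m₁, l₁, F₁, hF₁, he₁⟩ := ihf
      obtain ⟨m₂, l₂, F₂, hF₂, he₂⟩ := ihg
      refine ⟨m₁ + m₂, Fin.append l₁ l₂,
        fun x => F₁ (fun i => x (Fin.castAdd m₂ i)) * F₂ (fun i => x (Fin.natAdd m₁ i)),
        (selContDiff _ hF₁).mul (selContDiff _ hF₂), fun z => ?_⟩
      have e1 : (fun i => Fin.append l₁ l₂ (Fin.castAdd m₂ i) (z : E)) =
          fun i => l₁ i (z : E) := by
        funext i; rw [Fin.append_left]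
      have e2 : (fun i => Fin.append l₁ l₂ (Fin.natAdd m₁ i) (z : E)) =
          fun i => l₂ i (z : E) := by
        funext i; rw [Fin.append_right]
      simp only [ContinuousMap.mul_apply, he₁ z, he₂ z, e1, e2]
  -- Stone-Weierstrass approximation for each j
  have hswj : ∀ j : Fin n, ∃ p : C(K, ℝ), p ∈ A ∧ ∀ z : K, |p z - u j z| ≤ ε := by
    intro j
    obtain ⟨g, hg⟩ := ContinuousMap.exists_mem_subalgebra_near_continuous_of_separatesPoints
      A hsep (fun z : K => u j z) ((hu j).comp continuous_subtype_val) ε hε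
    exact ⟨g, g.2, fun z => (le_of_lt (by simpa using hg z))⟩
  choose p hpA hpu using hswj
  have hrep := fun j => repr (p j) (hpA j)
  choose m l F hF he using hrep
  -- merge into a common list of functionals
  set mmax : ℕ := Finset.univ.sup m with hmmax
  have hle : ∀ j, m j ≤ mmax := fun j => Finset.le_sup (Finset.mem_univ j)
  set e : Fin n × Fin mmax ≃ Fin (n * mmax) := finProdFinEquiv with hee
  set l' : Fin n → Fin mmax → (E →L[ℝ] ℝ) := fun j i =>
    if h : (i : ℕ) < m j then l j ⟨i, h⟩ else 0 with hl'
  refine ⟨n * mmax, fun k => l' (e.symm k).1 (e.symm k).2,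
    fun j x => F j (fun i => x (e (j, Fin.castLE (hle j) i))),
    fun j => selContDiff _ (hF j), fun j z hz => ?_⟩
  have key : (fun i => l' (e.symm (e (j, Fin.castLE (hle j) i))).1
      (e.symm (e (j, Fin.castLE (hle j) i))).2 z) = fun i => l j i z := by
    funext i
    rw [Equiv.symm_apply_apply]
    show l' j (Fin.castLE (hle j) i) z = l j i z
    rw [hl']
    have hi : ((Fin.castLE (hle j) i : Fin mmax) : ℕ) < m j := i.2
    simp only [dif_pos hi]
    have hieq : (⟨((Fin.castLE (hle j) i : Fin mmax) : ℕ), hi⟩ : Fin (m j)) = i :=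
      Fin.ext rfl
    rw [hieq]
  show |F j (fun i => l' (e.symm (e (j, Fin.castLE (hle j) i))).1
      (e.symm (e (j, Fin.castLE (hle j) i))).2 z) - u j z| ≤ ε
  rw [key, ← he j ⟨z, hz⟩]
  exact hpu j ⟨z, hz⟩



lemma exists_renormalized_clip {n m : ℕ} (F : Fin n → (Fin m → ℝ) → ℝ)
    (hF : ∀ j, ContDiff ℝ 1 (F j)) (R τ : ℝ) (hR : 0 < R) (hτ1 : τ < 1) :
    ∃ f : Fin n → (Fin m → ℝ) → ℝ,
      (∀ j, ContDiff ℝ 1 (f j)) ∧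
      (∀ j, ∃ C, ∀ x, ‖fderiv ℝ (f j) x‖ ≤ C) ∧
      (∀ x, ∑ j, f j x ^ 2 ≤ 1) ∧
      (∀ x : Fin m → ℝ, (∀ i, |x i| ≤ R) → (∑ j, F j x ^ 2 ≤ τ) → ∀ j, f j x = F j x) := by
  obtain ⟨ψ, hψC1, hψid, hψbnd, hψd⟩ := exists_psi R hR
  obtain ⟨φ, hφC1, hφ0, hφnn, hφge⟩ := exists_phi τ hτ1
  set c : (Fin m → ℝ) → (Fin m → ℝ) := fun x i => ψ (x i) with hc
  set q : (Fin m → ℝ) → ℝ := fun y => ∑ j, F j y ^ 2 with hq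
  have hqC1 : ContDiff ℝ 1 q := ContDiff.sum fun j _ => (hF j).pow 2
  have hqnn : ∀ y, 0 ≤ q y := fun y => Finset.sum_nonneg fun j _ => sq_nonneg _
  have hpos : ∀ y, 0 < 1 + φ (q y) := fun y => by linarith [hφnn (q y)]
  set D : (Fin m → ℝ) → ℝ := fun y => Real.sqrt (1 + φ (q y)) with hD
  have hDpos : ∀ y, 0 < D y := fun y => Real.sqrt_pos.2 (hpos y)
  have hDC1 : ContDiff ℝ 1 D := by
    rw [contDiff_iff_contDiffAt]
    intro y
    exact (Real.contDiffAt_sqrt (ne_of_gt (hpos y))).comp y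
      ((contDiff_const.add (hφC1.comp hqC1)).contDiffAt)
  set G : Fin n → (Fin m → ℝ) → ℝ := fun j y => F j y * (D y)⁻¹ with hG
  have hGC1 : ∀ j, ContDiff ℝ 1 (G j) := fun j =>
    (hF j).mul (hDC1.inv fun y => ne_of_gt (hDpos y))
  have hcC1 : ContDiff ℝ 1 c :=
    contDiff_pi.2 fun i => hψC1.comp (contDiff_apply (𝕜 := ℝ) (E := ℝ) i)
  have hcball : ∀ x, c x ∈ Metric.closedBall (0 : Fin m → ℝ) (2*R) := by
    intro x
    rw [Metric.mem_closedBall, dist_zero_right]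
    refine pi_norm_le_iff_of_nonneg (by positivity) |>.2 fun i => ?_
    rw [Real.norm_eq_abs]; exact hψbnd (x i)
  -- derivative of c
  have hψdiff : Differentiable ℝ ψ := hψC1.differentiable one_ne_zero
  set L : (Fin m → ℝ) → ((Fin m → ℝ) →L[ℝ] (Fin m → ℝ)) := fun x =>
    ContinuousLinearMap.pi fun i => deriv ψ (x i) •
      ContinuousLinearMap.proj (R := ℝ) (φ := fun _ : Fin m => ℝ) i with hL
  have hcderiv : ∀ x, HasFDerivAt c (L x) x := by
    intro x
    apply hasFDerivAt_pi''
    intro i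
    rw [hL, ContinuousLinearMap.proj_pi]
    exact ((hψdiff (x i)).hasDerivAt).comp_hasFDerivAt x
      (ContinuousLinearMap.proj (R := ℝ) (φ := fun _ : Fin m => ℝ) i).hasFDerivAt
  have hcnorm : ∀ x, ‖L x‖ ≤ 1 := by
    intro x
    refine ContinuousLinearMap.opNorm_le_bound _ zero_le_one fun v => ?_
    rw [one_mul]
    refine pi_norm_le_iff_of_nonneg (norm_nonneg v) |>.2 fun i => ?_
    simp only [hL, ContinuousLinearMap.pi_apply, ContinuousLinearMap.smul_apply,
      ContinuousLinearMap.proj_apply, smul_eq_mul, Real.norm_eq_abs, abs_mul]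
    calc |deriv ψ (x i)| * |v i| ≤ 1 * |v i| :=
          mul_le_mul_of_nonneg_right (hψd (x i)) (abs_nonneg _)
      _ = |v i| := one_mul _
      _ ≤ ‖v‖ := by rw [← Real.norm_eq_abs]; exact norm_le_pi_norm v i
  refine ⟨fun j x => G j (c x), fun j => (hGC1 j).comp hcC1, ?_, ?_, ?_⟩
  · -- bounded derivative
    intro j
    have hfd : Continuous (fderiv ℝ (G j)) := (hGC1 j).continuous_fderiv one_ne_zero
    obtain ⟨C, hC⟩ := (isCompact_closedBall (0 : Fin m → ℝ) (2*R)).exists_bound_of_continuousOn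
      hfd.continuousOn
    refine ⟨C, fun x => ?_⟩
    have hchain : HasFDerivAt (fun x => G j (c x))
        ((fderiv ℝ (G j) (c x)).comp (L x)) x :=
      (((hGC1 j).differentiable one_ne_zero (c x)).hasFDerivAt).comp x (hcderiv x)
    rw [hchain.fderiv]
    calc ‖(fderiv ℝ (G j) (c x)).comp (L x)‖
        ≤ ‖fderiv ℝ (G j) (c x)‖ * ‖L x‖ :=
          ContinuousLinearMap.opNorm_comp_le _ _
      _ ≤ C * 1 := mul_le_mul (hC _ (hcball x)) (hcnorm x) (norm_nonneg _)
          (le_trans (norm_nonneg _) (hC _ (hcball x)))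
      _ = C := mul_one C
  · -- sum of squares ≤ 1
    intro x
    set y := c x
    have hsum : ∑ j, G j y ^ 2 = q y * ((D y)⁻¹)^2 := by
      rw [hq, Finset.sum_mul]
      exact Finset.sum_congr rfl fun j _ => by rw [hG, mul_pow]
    have hDsq : ((D y)⁻¹)^2 = (1 + φ (q y))⁻¹ := by
      rw [inv_pow, hD, Real.sq_sqrt (hpos y).le]
    rw [hsum, hDsq]
    rw [show q y * (1 + φ (q y))⁻¹ = q y / (1 + φ (q y)) from (div_eq_mul_inv _ _).symm]
    rw [div_le_one (hpos y)]
    linarith [hφge (q y)]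
  · -- equality under the constraints
    intro x hx hq' j
    have hcx : c x = x := funext fun i => hψid (x i) (hx i)
    show G j (c x) = F j x
    rw [hcx, hG]
    have : φ (q x) = 0 := hφ0 _ hq'
    simp only [hD, this, add_zero, Real.sqrt_one, inv_one, mul_one]


lemma abs_le_of_sq_le_sq' {a b : ℝ} (h : a ^ 2 ≤ b ^ 2) (hb : 0 ≤ b) : |a| ≤ b := by
  have := Real.sqrt_le_sqrt h
  rwa [Real.sqrt_sq_eq_abs, Real.sqrt_sq hb] at this

lemma abs_le_of_mem_sum_sq {n : ℕ} (f : Fin n → ℝ) {b : ℝ} (hb : 0 ≤ b)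
    (h : ∑ j, f j ^ 2 ≤ b ^ 2) (j : Fin n) : |f j| ≤ b :=
  abs_le_of_sq_le_sq' (le_trans (Finset.single_le_sum
    (f := fun i => f i ^ 2) (fun i _ => sq_nonneg _) (Finset.mem_univ j)) h) hb

/-- The key approximation lemma: measurable `s` with `∑ sⱼ² ≤ b² < 1` can be
`L¹(κ)`-approximated by cylinder `C¹` functions with `∑ gⱼ² ≤ 1`. -/
lemma approx {E : Type*} [NormedAddCommGroup E] [NormedSpace ℝ E] [CompleteSpace E]
    [SecondCountableTopology E] [MeasurableSpace E] [BorelSpace E]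
    (κ : Measure E) [IsFiniteMeasure κ] {n : ℕ} (s : Fin n → E → ℝ)
    (hs : ∀ j, Measurable (s j)) (b : ℝ) (hb0 : 0 < b) (hb1 : b < 1)
    (hsb : ∀ z, ∑ j, s j z ^ 2 ≤ b ^ 2) {ε : ℝ} (hε : 0 < ε) :
    ∃ g : Fin n → E → ℝ,
      (∀ j, g j ∈ FCb1 E) ∧ (∀ z, ∑ j, g j z ^ 2 ≤ 1) ∧
      (∀ j, Continuous (g j)) ∧ (∀ j z, |g j z| ≤ 1) ∧
      ∀ j, ∫ z, |g j z - s j z| ∂κ ≤ ε := by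
  haveI : Nonempty E := ⟨0⟩
  have hsjb : ∀ j z, |s j z| ≤ b := fun j z => abs_le_of_mem_sum_sq _ hb0.le (hsb z) j
  have hsint : ∀ j, Integrable (s j) κ := fun j =>
    (integrable_const b).mono' (hs j).aestronglyMeasurable
      (ae_of_all _ fun z => by rw [Real.norm_eq_abs]; exact hsjb j z)
  -- step 1 : bounded continuous approximation
  set ε₁ : ℝ := ε / (3 * (n + 1)) with hε₁
  have hε₁pos : 0 < ε₁ := by positivity
  have hbc : ∀ j : Fin n, ∃ c : E →ᵇ ℝ, (∫ z, ‖s j z - c z‖ ∂κ) ≤ ε₁ ∧ Integrable c κ :=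
    fun j => (hsint j).exists_boundedContinuous_integral_sub_le hε₁pos
  choose c hcerr hcint using hbc
  -- step 2 : renormalize
  set r : E → ℝ := fun z => Real.sqrt (∑ j, c j z ^ 2) with hr
  set M : E → ℝ := fun z => max b (r z) with hM
  have hrnn : ∀ z, 0 ≤ r z := fun z => Real.sqrt_nonneg _
  have hMpos : ∀ z, 0 < M z := fun z => lt_of_lt_of_le hb0 (le_max_left _ _)
  set ch : Fin n → E → ℝ := fun j z => c j z * (b / M z) with hch
  have hrcont : Continuous r :=
    Real.continuous_sqrt.comp (continuous_finset_sum _ fun j _ => ((c j).continuous).pow 2)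
  have hMcont : Continuous M := continuous_const.max hrcont
  have hchcont : ∀ j, Continuous (ch j) := fun j =>
    ((c j).continuous).mul (continuous_const.div hMcont fun z => (hMpos z).ne')
  have habs_c_le : ∀ j z, |c j z| ≤ r z := by
    intro j z
    rw [hr, show |c j z| = Real.sqrt (c j z ^ 2) from (Real.sqrt_sq_eq_abs _).symm]
    exact Real.sqrt_le_sqrt (Finset.single_le_sum
      (f := fun i => c i z ^ 2) (fun i _ => sq_nonneg _) (Finset.mem_univ j))
  have hchb : ∀ j z, |ch j z| ≤ b := by
    intro j z
    rw [hch]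
    have h1 : 0 ≤ b / M z := le_of_lt (div_pos hb0 (hMpos z))
    rw [abs_mul, abs_of_nonneg h1]
    calc |c j z| * (b / M z) ≤ M z * (b / M z) :=
        mul_le_mul_of_nonneg_right (le_trans (habs_c_le j z) (le_max_right _ _)) h1
      _ = b := by have := (hMpos z).ne'; field_simp
  have hchsq : ∀ z, ∑ j, ch j z ^ 2 ≤ b ^ 2 := by
    intro z
    have : ∑ j, ch j z ^ 2 = (∑ j, c j z ^ 2) * (b / M z) ^ 2 := by
      rw [Finset.sum_mul]
      exact Finset.sum_congr rfl fun j _ => by rw [hch, mul_pow]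
    rw [this]
    have hrles : (∑ j, c j z ^ 2) = r z ^ 2 := by
      rw [hr, Real.sq_sqrt (Finset.sum_nonneg fun j _ => sq_nonneg _)]
    rw [hrles, div_pow, ← mul_div_assoc]
    rw [div_le_iff₀ (by positivity)]
    have : r z ^ 2 ≤ M z ^ 2 := pow_le_pow_left₀ (hrnn z) (le_max_right _ _) 2
    nlinarith [sq_nonneg b]
  -- pointwise renormalization error
  have hcherr_pt : ∀ j z, |ch j z - s j z| ≤ |c j z - s j z| + ∑ i, |c i z - s i z| := by
    intro j z
    have h1 : |ch j z - c j z| ≤ ∑ i, |c i z - s i z| := by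
      have e1 : |ch j z - c j z| = |c j z| * (1 - b / M z) := by
        rw [hch]
        rw [show c j z * (b / M z) - c j z = -(c j z * (1 - b / M z)) by ring]
        rw [abs_neg, abs_mul]
        congr 1
        rw [abs_of_nonneg]
        have : b / M z ≤ 1 := div_le_one_of_le₀ (le_max_left _ _) (hMpos z).le
        linarith
      rw [e1]
      have h2 : |c j z| * (1 - b / M z) ≤ M z * (1 - b / M z) := by
        apply mul_le_mul_of_nonneg_right (le_trans (habs_c_le j z) (le_max_right _ _))
        have : b / M z ≤ 1 := div_le_one_of_le₀ (le_max_left _ _) (hMpos z).le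
        linarith
      have h3 : M z * (1 - b / M z) = M z - b := by have := (hMpos z).ne'; field_simp
      have h4 : M z - b ≤ ∑ i, |c i z - s i z| := by
        rcases max_cases b (r z) with ⟨hmc, hmle⟩ | ⟨hmc, hmle⟩
        · rw [hM]; simp only [hmc]
          simp only [sub_self]
          exact Finset.sum_nonneg fun i _ => abs_nonneg _
        · rw [hM]; simp only [hmc]
          have hρ : Real.sqrt (∑ i, s i z ^ 2) ≤ b := by
            calc Real.sqrt (∑ i, s i z ^ 2) ≤ Real.sqrt (b ^ 2) :=
                Real.sqrt_le_sqrt (hsb z)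
              _ = b := Real.sqrt_sq hb0.le
          calc r z - b ≤ r z - Real.sqrt (∑ i, s i z ^ 2) := by linarith
            _ ≤ |r z - Real.sqrt (∑ i, s i z ^ 2)| := le_abs_self _
            _ ≤ ∑ i, |c i z - s i z| := by
                rw [hr]; exact abs_sqrt_sum_sq_sub_le _ _
      linarith
    calc |ch j z - s j z| ≤ |ch j z - c j z| + |c j z - s j z| := by
          rw [show ch j z - s j z = (ch j z - c j z) + (c j z - s j z) by ring]
          exact abs_add_le _ _
      _ ≤ |c j z - s j z| + ∑ i, |c i z - s i z| := by linarith
  -- integral renormalization error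
  have hcsint : ∀ j, Integrable (fun z => |c j z - s j z|) κ :=
    fun j => (((hcint j).sub (hsint j)).abs).congr
      (ae_of_all _ fun z => by simp [Pi.sub_apply])
  have hcserr : ∀ j, ∫ z, |c j z - s j z| ∂κ ≤ ε₁ := by
    intro j
    refine le_trans (le_of_eq (integral_congr_ae (ae_of_all _ fun z => ?_))) (hcerr j)
    show |c j z - s j z| = ‖s j z - c j z‖
    rw [Real.norm_eq_abs, abs_sub_comm]
  have hchint : ∀ j, Integrable (fun z => |ch j z - s j z|) κ := by
    intro j
    refine (integrable_const (b + b)).mono'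
      ((((hchcont j).measurable.sub (hs j)).abs).aestronglyMeasurable) ?_
    refine ae_of_all _ fun z => ?_
    rw [Real.norm_eq_abs, abs_abs]
    calc |ch j z - s j z| ≤ |ch j z| + |s j z| := abs_sub _ _
      _ ≤ b + b := add_le_add (hchb j z) (hsjb j z)
  have hcherr : ∀ j, ∫ z, |ch j z - s j z| ∂κ ≤ ε / 3 := by
    intro j
    have hmono : ∫ z, |ch j z - s j z| ∂κ ≤
        ∫ z, (|c j z - s j z| + ∑ i, |c i z - s i z|) ∂κ := by
      refine integral_mono (hchint j) ((hcsint j).add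
        (integrable_finset_sum _ fun i _ => hcsint i)) fun z => hcherr_pt j z
    have heq : ∫ z, (|c j z - s j z| + ∑ i, |c i z - s i z|) ∂κ =
        (∫ z, |c j z - s j z| ∂κ) + ∑ i, ∫ z, |c i z - s i z| ∂κ := by
      rw [integral_add (hcsint j) (integrable_finset_sum _ fun i _ => hcsint i),
        integral_finset_sum _ fun i _ => hcsint i]
    have hsumbd : (∫ z, |c j z - s j z| ∂κ) + ∑ i, ∫ z, |c i z - s i z| ∂κ ≤
        (n + 1) * ε₁ := by
      have h1 : ∑ i : Fin n, ∫ z, |c i z - s i z| ∂κ ≤ ∑ _i : Fin n, ε₁ :=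
        Finset.sum_le_sum fun i _ => hcserr i
      rw [Finset.sum_const, Finset.card_univ, Fintype.card_fin, nsmul_eq_mul] at h1
      have := hcserr j
      linarith
    have : ((n:ℝ) + 1) * ε₁ = ε / 3 := by
      rw [hε₁]; field_simp
    linarith [hmono.trans (heq ▸ hsumbd)]
  -- step 3 : compact set
  have h6pos : (0:ℝ) < ε / 6 := by positivity
  obtain ⟨K, hKcomp, hKlt⟩ := exists_compact_compl_lt κ
    (ε := ENNReal.ofReal (ε/6)) (ENNReal.ofReal_pos.2 h6pos).ne'
  have hKmeas : MeasurableSet K := hKcomp.isClosed.measurableSet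
  have hKtoReal : (κ Kᶜ).toReal ≤ ε / 6 :=
    ENNReal.toReal_le_of_le_ofReal h6pos.le hKlt.le
  -- step 4 : constants
  set τ : ℝ := (1 + b^2)/2 with hτ
  have hτ1 : τ < 1 := by rw [hτ]; nlinarith
  have hτpos : 0 < τ := by rw [hτ]; positivity
  have hbτ : b < Real.sqrt τ := by
    rw [show b = Real.sqrt (b^2) from (Real.sqrt_sq hb0.le).symm]
    apply Real.sqrt_lt_sqrt (sq_nonneg b)
    rw [hτ]; nlinarith
  set δ : ℝ := (Real.sqrt τ - b)/(n+1) with hδ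
  have hδpos : 0 < δ := div_pos (by linarith) (by positivity)
  set tk : ℝ := (κ Set.univ).toReal with htk
  have htknn : 0 ≤ tk := ENNReal.toReal_nonneg
  set ε₃ : ℝ := min δ (ε/(3*(tk+1))) with hε₃
  have hε₃pos : 0 < ε₃ := lt_min hδpos (by positivity)
  -- step 5 : Stone-Weierstrass
  obtain ⟨m, l, F, hFC1, hFerr⟩ := exists_cylinder_approx hKcomp ch hchcont ε₃ hε₃pos
  -- step 6 : bound the functionals on K
  have hRbound : ∀ i : Fin m, ∃ C, ∀ z ∈ K, ‖l i z‖ ≤ C := fun i =>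
    hKcomp.exists_bound_of_continuousOn (l i).continuous.continuousOn
  choose C hC using hRbound
  set R : ℝ := 1 + ∑ i, max (C i) 0 with hR
  have hRpos : 0 < R := by
    rw [hR]
    have : 0 ≤ ∑ i, max (C i) 0 := Finset.sum_nonneg fun i _ => le_max_right _ _
    linarith
  have hRK : ∀ z ∈ K, ∀ i, |l i z| ≤ R := by
    intro z hz i
    calc |l i z| = ‖l i z‖ := (Real.norm_eq_abs _).symm
      _ ≤ C i := hC i z hz
      _ ≤ max (C i) 0 := le_max_left _ _
      _ ≤ ∑ i', max (C i') 0 := Finset.single_le_sum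
          (f := fun i' => max (C i') 0) (fun i' _ => le_max_right _ _) (Finset.mem_univ i)
      _ ≤ R := by rw [hR]; linarith
  -- step 7 : sum of squares small on K
  have hFτ : ∀ z ∈ K, ∑ j, F j (fun i => l i z) ^ 2 ≤ τ := by
    intro z hz
    have h1 : Real.sqrt (∑ j, F j (fun i => l i z) ^ 2)
        ≤ Real.sqrt (∑ j, ch j z ^ 2) + ∑ j, |F j (fun i => l i z) - ch j z| := by
      have h := abs_sqrt_sum_sq_sub_le (fun j => F j (fun i => l i z)) (fun j => ch j z)
      have h' := le_abs_self (Real.sqrt (∑ j, F j (fun i => l i z) ^ 2)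
        - Real.sqrt (∑ j, ch j z ^ 2))
      linarith
    have h2 : Real.sqrt (∑ j, ch j z ^ 2) ≤ b := by
      calc Real.sqrt (∑ j, ch j z ^ 2) ≤ Real.sqrt (b ^ 2) :=
          Real.sqrt_le_sqrt (hchsq z)
        _ = b := Real.sqrt_sq hb0.le
    have h3 : ∑ j, |F j (fun i => l i z) - ch j z| ≤ n * ε₃ := by
      calc ∑ j, |F j (fun i => l i z) - ch j z| ≤ ∑ _j : Fin n, ε₃ :=
          Finset.sum_le_sum fun j _ => hFerr j z hz
        _ = n * ε₃ := by
          rw [Finset.sum_const, Finset.card_univ, Fintype.card_fin, nsmul_eq_mul]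
    have h4 : Real.sqrt (∑ j, F j (fun i => l i z) ^ 2) ≤ Real.sqrt τ := by
      have hε₃δ : ε₃ ≤ δ := min_le_left _ _
      have h5 : (n:ℝ) * ε₃ ≤ ((n:ℝ)+1) * δ := by
        have : (n:ℝ) * ε₃ ≤ (n:ℝ) * δ :=
          mul_le_mul_of_nonneg_left hε₃δ (Nat.cast_nonneg n)
        nlinarith
      have h6 : ((n:ℝ)+1) * δ = Real.sqrt τ - b := by
        rw [hδ]; field_simp
      linarith
    calc ∑ j, F j (fun i => l i z) ^ 2
        = Real.sqrt (∑ j, F j (fun i => l i z) ^ 2) ^ 2 :=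
          (Real.sq_sqrt (Finset.sum_nonneg fun j _ => sq_nonneg _)).symm
      _ ≤ Real.sqrt τ ^ 2 :=
          pow_le_pow_left₀ (Real.sqrt_nonneg _) h4 2
      _ = τ := Real.sq_sqrt hτpos.le
  -- step 8 : clip
  obtain ⟨f, hfC1, hfD, hfsq, hfeq⟩ := exists_renormalized_clip F hFC1 R τ hRpos hτ1
  set g : Fin n → E → ℝ := fun j z => f j (fun i => l i z) with hg
  have hfabs : ∀ j x, |f j x| ≤ 1 := fun j x =>
    abs_le_of_mem_sum_sq (fun j' => f j' x) zero_le_one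
      (by rw [one_pow]; exact hfsq x) j
  have hgcont : ∀ j, Continuous (g j) := fun j =>
    ((hfC1 j).continuous).comp (continuous_pi fun i => (l i).continuous)
  have hgF : ∀ j, g j ∈ FCb1 E := fun j =>
    ⟨m, l, f j, hfC1 j, ⟨1, fun x => hfabs j x⟩, hfD j, fun z => rfl⟩
  refine ⟨g, hgF, fun z => hfsq _, hgcont, fun j z => hfabs j _, fun j => ?_⟩
  -- step 9 : the error estimate
  have hgch : ∀ z, |g j z - ch j z| ≤ ε₃ + Set.indicator Kᶜ (fun _ => (2:ℝ)) z := by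
    intro z
    by_cases hz : z ∈ K
    · have h1 : g j z = F j (fun i => l i z) :=
        hfeq _ (fun i => hRK z hz i) (hFτ z hz) j
      rw [h1, Set.indicator_of_notMem (by simp [hz]), add_zero]
      exact hFerr j z hz
    · rw [Set.indicator_of_mem (by simp [hz])]
      calc |g j z - ch j z| ≤ |g j z| + |ch j z| := abs_sub _ _
        _ ≤ 1 + b := add_le_add (hfabs j _) (hchb j z)
        _ ≤ ε₃ + 2 := by linarith
  have hint_g : Integrable (fun z => |g j z - ch j z|) κ := by
    refine (integrable_const (1 + b)).mono'
      (((hgcont j).sub (hchcont j)).abs).aestronglyMeasurable ?_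
    refine ae_of_all _ fun z => ?_
    rw [Real.norm_eq_abs, abs_abs]
    calc |g j z - ch j z| ≤ |g j z| + |ch j z| := abs_sub _ _
      _ ≤ 1 + b := add_le_add (hfabs j _) (hchb j z)
  have hint_rhs : Integrable (fun z => ε₃ + Set.indicator Kᶜ (fun _ => (2:ℝ)) z) κ :=
    (integrable_const _).add ((integrable_const 2).indicator hKmeas.compl)
  have h1 : ∫ z, |g j z - ch j z| ∂κ ≤ ε/3 + ε/3 := by
    calc ∫ z, |g j z - ch j z| ∂κ
        ≤ ∫ z, (ε₃ + Set.indicator Kᶜ (fun _ => (2:ℝ)) z) ∂κ :=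
          integral_mono hint_g hint_rhs hgch
      _ = tk * ε₃ + (κ Kᶜ).toReal * 2 := by
          rw [integral_add (integrable_const _)
            ((integrable_const 2).indicator hKmeas.compl), integral_const,
            integral_indicator_const _ hKmeas.compl, smul_eq_mul, smul_eq_mul, htk, measureReal_def, measureReal_def]
      _ ≤ ε/3 + ε/3 := by
          have e1 : tk * ε₃ ≤ ε/3 := by
            have h2 : ε₃ ≤ ε/(3*(tk+1)) := min_le_right _ _
            have h3 : tk * ε₃ ≤ tk * (ε/(3*(tk+1))) :=
              mul_le_mul_of_nonneg_left h2 htknn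
            have h4 : tk * (ε/(3*(tk+1))) ≤ (tk+1) * (ε/(3*(tk+1))) := by
              apply mul_le_mul_of_nonneg_right (by linarith)
              positivity
            have h5 : (tk+1) * (ε/(3*(tk+1))) = ε/3 := by
              field_simp
            linarith
          have e2 : (κ Kᶜ).toReal * 2 ≤ ε/3 := by linarith [hKtoReal]
          linarith
  -- combine
  have hint_gs : Integrable (fun z => |g j z - s j z|) κ := by
    refine (integrable_const (1 + b)).mono'
      ((((hgcont j).measurable.sub (hs j)).abs).aestronglyMeasurable) ?_
    refine ae_of_all _ fun z => ?_
    rw [Real.norm_eq_abs, abs_abs]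
    calc |g j z - s j z| ≤ |g j z| + |s j z| := abs_sub _ _
      _ ≤ 1 + b := add_le_add (hfabs j _) (hsjb j z)
  calc ∫ z, |g j z - s j z| ∂κ
      ≤ ∫ z, (|g j z - ch j z| + |ch j z - s j z|) ∂κ := by
        refine integral_mono hint_gs (hint_g.add (hchint j)) fun z => ?_
        calc |g j z - s j z| = |(g j z - ch j z) + (ch j z - s j z)| := by ring_nf
          _ ≤ |g j z - ch j z| + |ch j z - s j z| := abs_add_le _ _
    _ = (∫ z, |g j z - ch j z| ∂κ) + ∫ z, |ch j z - s j z| ∂κ :=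
        integral_add hint_g (hchint j)
    _ ≤ (ε/3 + ε/3) + ε/3 := add_le_add h1 (hcherr j)
    _ = ε := by ring


end Stmt9Aux

open Stmt9Aux in
/-- the duality estimate used in the proof of Theorem 3.2. -/
theorem stmt9 {E : Type*} [NormedAddCommGroup E] [NormedSpace ℝ E] [CompleteSpace E]
    [SecondCountableTopology E] [MeasurableSpace E] [BorelSpace E]
    (γ : Measure E) [IsFiniteMeasure γ] (n : ℕ)
    (v : Fin n → E → ℝ) (hv : ∀ j, Integrable (v j) γ) (V : ℝ) (hV : 0 ≤ V)
    (h : ∀ g : Fin n → E → ℝ, (∀ j, g j ∈ FCb1 E) → (∀ z, ∑ j, g j z ^ 2 ≤ 1) →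
      ∑ j, ∫ z, g j z * v j z ∂γ ≤ V) :
    ∫ z, Real.sqrt (∑ j, v j z ^ 2) ∂γ ≤ V := by
  classical
  -- measurable representatives
  have hvm : ∀ j, AEStronglyMeasurable (v j) γ := fun j => (hv j).1
  set w : Fin n → E → ℝ := fun j => (hvm j).mk (v j) with hwdef
  have hwm : ∀ j, Measurable (w j) := fun j => ((hvm j).stronglyMeasurable_mk).measurable
  have hwae : ∀ j, v j =ᵐ[γ] w j := fun j => (hvm j).ae_eq_mk
  have hwint : ∀ j, Integrable (w j) γ := fun j => (hv j).congr (hwae j)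
  have hall : ∀ᵐ z ∂γ, ∀ j, v j z = w j z := (ae_all_iff).2 fun j => hwae j
  -- reduce to measurable representatives
  have hgoal : ∫ z, Real.sqrt (∑ j, v j z ^ 2) ∂γ =
      ∫ z, Real.sqrt (∑ j, w j z ^ 2) ∂γ := by
    refine integral_congr_ae ?_
    filter_upwards [hall] with z hz
    simp only [hz]
  rw [hgoal]
  set T : E → ℝ := fun z => ∑ j, w j z ^ 2 with hT
  have hTnn : ∀ z, 0 ≤ T z := fun z => Finset.sum_nonneg fun j _ => sq_nonneg _
  have hTm : Measurable T := Finset.measurable_sum _ fun j _ => (hwm j).pow_const 2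
  have hsumabs_int : Integrable (fun z => ∑ j, |w j z|) γ :=
    integrable_finset_sum _ fun j _ => (hwint j).abs
  have hTint : Integrable (fun z => Real.sqrt (T z)) γ := by
    refine hsumabs_int.mono' ((Real.continuous_sqrt.measurable.comp hTm).aestronglyMeasurable) ?_
    refine ae_of_all _ fun z => ?_
    rw [Real.norm_eq_abs, abs_of_nonneg (Real.sqrt_nonneg _)]
    exact sqrt_sum_sq_le_sum_abs _
  set I : ℝ := ∫ z, Real.sqrt (T z) ∂γ with hI
  set tγ : ℝ := (γ Set.univ).toReal with htγ
  have htγnn : 0 ≤ tγ := ENNReal.toReal_nonneg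
  -- the key estimate for every small ε
  have key : ∀ ε : ℝ, 0 < ε → ε < 1 →
      I ≤ (V + n * ε) / (1 - ε) + ε * tγ := by
    intro ε hε hε1
    set b : ℝ := 1 - ε with hb
    have hb0 : 0 < b := by rw [hb]; linarith
    have hb1 : b < 1 := by rw [hb]; linarith
    set d : E → ℝ := fun z => Real.sqrt (T z + ε ^ 2) with hd
    have hdpos : ∀ z, 0 < d z := fun z =>
      Real.sqrt_pos.2 (by have := hTnn z; positivity)
    set s : Fin n → E → ℝ := fun j z => b * w j z / d z with hs
    have hsm : ∀ j, Measurable (s j) :=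
      fun j => ((measurable_const.mul (hwm j)).div
        ((hTm.add_const _).sqrt))
    have hdsq : ∀ z, d z ^ 2 = T z + ε ^ 2 := fun z =>
      Real.sq_sqrt (by have := hTnn z; positivity)
    have hssq : ∀ z, ∑ j, s j z ^ 2 ≤ b ^ 2 := by
      intro z
      have : ∑ j, s j z ^ 2 = b ^ 2 * T z / d z ^ 2 := by
        rw [hT, Finset.mul_sum, Finset.sum_div]
        refine Finset.sum_congr rfl fun j _ => ?_
        rw [hs, div_pow, mul_pow]
      rw [this, hdsq z]
      rw [div_le_iff₀ (by have := hTnn z; positivity)]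
      have hT0 := hTnn z
      nlinarith [sq_nonneg b, sq_nonneg ε]
    -- pointwise lower bound : √T ≤ (∑ s w)/b + ε
    have hpt : ∀ z, Real.sqrt (T z) ≤ (∑ j, s j z * w j z) / b + ε := by
      intro z
      have hsw : ∑ j, s j z * w j z = b * T z / d z := by
        rw [hT, Finset.mul_sum, Finset.sum_div]
        refine Finset.sum_congr rfl fun j _ => ?_
        rw [hs]; ring
      rw [hsw]
      have h1 : b * T z / d z / b = T z / d z := by
        field_simp
      rw [h1]
      -- √T - ε ≤ T/d
      rcases le_or_gt (Real.sqrt (T z)) ε with hc | hc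
      · have : 0 ≤ T z / d z := div_nonneg (hTnn z) (hdpos z).le
        linarith
      · have hdle : d z ≤ Real.sqrt (T z) + ε := by
          rw [show d z = Real.sqrt (T z + ε ^ 2) from rfl]
          rw [show T z + ε ^ 2 = Real.sqrt (T z) ^ 2 + ε ^ 2 by
            rw [Real.sq_sqrt (hTnn z)]]
          calc Real.sqrt (Real.sqrt (T z) ^ 2 + ε ^ 2)
              ≤ Real.sqrt ((Real.sqrt (T z) + ε) ^ 2) := by
                apply Real.sqrt_le_sqrt
                nlinarith [Real.sqrt_nonneg (T z)]
            _ = Real.sqrt (T z) + ε := Real.sqrt_sq (by positivity)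
        have h2 : (Real.sqrt (T z) - ε) * d z ≤ T z := by
          calc (Real.sqrt (T z) - ε) * d z ≤ (Real.sqrt (T z) - ε) * (Real.sqrt (T z) + ε) :=
              mul_le_mul_of_nonneg_left hdle (by linarith)
            _ = Real.sqrt (T z) ^ 2 - ε ^ 2 := by ring
            _ ≤ T z := by rw [Real.sq_sqrt (hTnn z)]; nlinarith
        rw [← sub_le_iff_le_add, le_div_iff₀ (hdpos z)]
        exact h2
    -- the measure κ
    set κ : Measure E := γ.withDensity
      (fun z => ((∑ j, |w j z|).toNNReal : ℝ≥0∞)) with hκ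
    have hwsum_m : Measurable (fun z => ∑ j, |w j z|) :=
      Finset.measurable_sum _ fun j _ => (hwm j).abs
    haveI : IsFiniteMeasure κ := by
      constructor
      rw [hκ, withDensity_apply _ MeasurableSet.univ, Measure.restrict_univ]
      have := hsumabs_int.2
      rw [HasFiniteIntegral] at this
      refine lt_of_le_of_lt (le_of_eq (lintegral_congr fun z => ?_)) this
      have hnn : (0:ℝ) ≤ ∑ j, |w j z| := Finset.sum_nonneg fun j _ => abs_nonneg _
      rw [show ((∑ j, |w j z|).toNNReal : ℝ≥0∞) =
        ENNReal.ofReal (∑ j, |w j z|) from rfl,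
        ← Real.enorm_eq_ofReal hnn]
    -- approximation
    obtain ⟨g, hgF, hgsq, hgcont, hgb1, hgerr⟩ :=
      approx κ s hsm b hb0 hb1 hssq (ε := ε) hε
    -- integrability facts
    have hsb : ∀ j z, |s j z| ≤ b := fun j z =>
      abs_le_of_mem_sum_sq (fun j' => s j' z) hb0.le (hssq z) j
    have hswint : ∀ j, Integrable (fun z => s j z * w j z) γ := fun j =>
      (hwint j).bdd_mul (hsm j).aestronglyMeasurable
        (ae_of_all _ fun z => by rw [Real.norm_eq_abs]; exact hsb j z)
    have hgwint : ∀ j, Integrable (fun z => g j z * w j z) γ := fun j =>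
      (hwint j).bdd_mul (hgcont j).aestronglyMeasurable
        (ae_of_all _ fun z => by rw [Real.norm_eq_abs]; exact hgb1 j z)
    -- ∫ s_j w_j ≤ ∫ g_j w_j + ε
    have hkey : ∀ j, ∫ z, s j z * w j z ∂γ ≤ (∫ z, g j z * w j z ∂γ) + ε := by
      intro j
      have hsub : ∫ z, s j z * w j z ∂γ - ∫ z, g j z * w j z ∂γ =
          ∫ z, (s j z - g j z) * w j z ∂γ := by
        rw [← integral_sub (hswint j) (hgwint j)]
        refine integral_congr_ae (ae_of_all _ fun z => ?_)
        ring
      have hle : ∫ z, (s j z - g j z) * w j z ∂γ ≤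
          ∫ z, |g j z - s j z| * (∑ i, |w i z|) ∂γ := by
        refine integral_mono ((hswint j).sub (hgwint j) |>.congr
          (ae_of_all _ fun z => by simp only [Pi.sub_apply]; ring)) ?_ fun z => ?_
        · refine hsumabs_int.bdd_mul (c := 1 + b) ?_ ?_
          · exact (((hgcont j).measurable.sub (hsm j)).abs).aestronglyMeasurable
          · exact ae_of_all _ fun z => by
              rw [Real.norm_eq_abs, abs_abs]
              calc |g j z - s j z| ≤ |g j z| + |s j z| := abs_sub _ _
                _ ≤ 1 + b := add_le_add (hgb1 j z) (hsb j z)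
        · calc (s j z - g j z) * w j z ≤ |(s j z - g j z) * w j z| := le_abs_self _
            _ = |g j z - s j z| * |w j z| := by rw [abs_mul, abs_sub_comm]
            _ ≤ |g j z - s j z| * ∑ i, |w i z| := by
                refine mul_le_mul_of_nonneg_left ?_ (abs_nonneg _)
                exact Finset.single_le_sum (f := fun i => |w i z|)
                  (fun i _ => abs_nonneg _) (Finset.mem_univ j)
      have hwd : ∫ z, |g j z - s j z| * (∑ i, |w i z|) ∂γ =
          ∫ z, |g j z - s j z| ∂κ := by
        rw [hκ, integral_withDensity_eq_integral_smul
          (hwsum_m.real_toNNReal) (fun z => |g j z - s j z|)]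
        refine integral_congr_ae (ae_of_all _ fun z => ?_)
        show |g j z - s j z| * (∑ i, |w i z|) =
          (∑ i, |w i z|).toNNReal • |g j z - s j z|
        rw [NNReal.smul_def, smul_eq_mul,
          Real.coe_toNNReal _ (Finset.sum_nonneg fun i _ => abs_nonneg _)]
        ring
      have := hgerr j
      linarith [hsub, hle, hwd ▸ hle]
    -- integrate the pointwise bound
    have hIle : I ≤ (∑ j, ∫ z, s j z * w j z ∂γ) / b + ε * tγ := by
      have h1 : I ≤ ∫ z, ((∑ j, s j z * w j z) / b + ε) ∂γ := by
        refine integral_mono hTint ?_ hpt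
        exact ((integrable_finset_sum _ fun j _ => hswint j).div_const b).add
          (integrable_const ε)
      have h2 : ∫ z, ((∑ j, s j z * w j z) / b + ε) ∂γ =
          (∑ j, ∫ z, s j z * w j z ∂γ) / b + ε * tγ := by
        rw [integral_add ((integrable_finset_sum _ fun j _ => hswint j).div_const b)
          (integrable_const ε), integral_div,
          integral_finset_sum _ fun j _ => hswint j, integral_const, smul_eq_mul, htγ, measureReal_def]
        ring
      linarith [h1.trans_eq h2]
    -- use the hypothesis
    have hsum_le : ∑ j, ∫ z, s j z * w j z ∂γ ≤ V + n * ε := by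
      have h1 : ∑ j, ∫ z, s j z * w j z ∂γ ≤
          (∑ j, ∫ z, g j z * w j z ∂γ) + n * ε := by
        calc ∑ j, ∫ z, s j z * w j z ∂γ
            ≤ ∑ j, ((∫ z, g j z * w j z ∂γ) + ε) := Finset.sum_le_sum fun j _ => hkey j
          _ = (∑ j, ∫ z, g j z * w j z ∂γ) + n * ε := by
              rw [Finset.sum_add_distrib, Finset.sum_const, Finset.card_univ,
                Fintype.card_fin, nsmul_eq_mul]
      have h2 : ∑ j, ∫ z, g j z * w j z ∂γ = ∑ j, ∫ z, g j z * v j z ∂γ := by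
        refine Finset.sum_congr rfl fun j _ => ?_
        refine integral_congr_ae ?_
        filter_upwards [hwae j] with z hz
        rw [hz]
      rw [h2] at h1
      exact h1.trans (by linarith [h g hgF hgsq])
    calc I ≤ (∑ j, ∫ z, s j z * w j z ∂γ) / b + ε * tγ := hIle
      _ ≤ (V + n * ε) / b + ε * tγ :=
          add_le_add_left ((div_le_div_iff_of_pos_right hb0).2 hsum_le) _
      _ = (V + n * ε) / (1 - ε) + ε * tγ := by rw [hb]
  -- pass to the limit ε → 0⁺
  have hV0 : Tendsto (fun ε : ℝ => (V + n * ε) / (1 - ε) + ε * tγ)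
      (nhdsWithin 0 (Set.Ioi 0)) (nhds V) := by
    have hc : ContinuousAt (fun ε : ℝ => (V + n * ε) / (1 - ε) + ε * tγ) 0 := by
      apply ContinuousAt.add
      · exact (continuousAt_const.add (continuous_const.mul continuous_id).continuousAt).div
          (continuousAt_const.sub continuous_id.continuousAt) (by norm_num)
      · exact (continuous_id.mul continuous_const).continuousAt
    have h1 := hc.tendsto.mono_left
      (nhdsWithin_le_nhds : nhdsWithin (0:ℝ) (Set.Ioi 0) ≤ nhds 0)
    convert h1 using 2
    norm_num
  refine ge_of_tendsto hV0 ?_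
  filter_upwards [Ioo_mem_nhdsGT_of_mem (Set.mem_Ico.2 ⟨le_refl (0:ℝ), one_pos⟩)]
    with ε hε
  exact key ε hε.1 hε.2


end
end
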